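/- arXiv:1202.5430 — 6 statements merged into one kernel-verified Lean document; each statement's English description precedes it below -/
import Mathlib

section
/- Let q > 1 and n ≥ 3 be integers and p a prime such that (q^n - 1)/(q - 1) = p^f for some positive integer f. Then n is odd. -/
open Finset

private lemma geom_nat (q : ℕ) (hq : 1 ≤ q) :
    ∀ k, (q - 1) * ∑ i ∈ range k, q ^ i = q ^ k - 1 := by
  intro k
  induction k with
  | zero => simp
  | succ k ih =>
    rw [sum_range_succ, Nat.mul_add, ih, pow_succ, Nat.sub_mul, one_mul]
    have h1 : 1 ≤ q ^ k := Nat.one_le_pow _ _ (by omega)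
    have h2 : q ^ k ≤ q * q ^ k := Nat.le_mul_of_pos_left _ (by omega)
    have h3 : q ^ k * q = q * q ^ k := by ring
    omega

private lemma parity_geom (q : ℕ) (hq : q % 2 = 1) :
    ∀ k, (∑ i ∈ range k, q ^ i) % 2 = k % 2 := by
  intro k
  induction k with
  | zero => simp
  | succ k ih =>
    rw [sum_range_succ]
    have : q ^ k % 2 = 1 := by rw [Nat.pow_mod, hq, one_pow]; rfl
    omega

theorem stmt0 (q n f p : ℕ) (hq : 1 < q) (hn : 3 ≤ n) (hp : p.Prime)
    (hf : 0 < f) (h : (q ^ n - 1) / (q - 1) = p ^ f) : Odd n := by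
  by_contra hodd
  rw [Nat.not_odd_iff_even] at hodd
  obtain ⟨m, hm⟩ := hodd
  have hq1 : 1 ≤ q := le_of_lt hq
  have hm2 : 2 ≤ m := by omega
  -- S n = p ^ f
  have key := geom_nat q hq1
  have hSn : (∑ i ∈ range n, q ^ i) = p ^ f := by
    have h1 := key n
    have hq0 : 0 < q - 1 := by omega
    have h2 : (q ^ n - 1) / (q - 1) = ∑ i ∈ range n, q ^ i := by
      rw [← h1, Nat.mul_div_cancel_left _ hq0]
    omega
  -- factorization
  set A := ∑ i ∈ range m, q ^ i with hA_def
  set B := 1 + q ^ m with hB_def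
  have hfac : A * B = p ^ f := by
    rw [← hSn, hm, sum_range_add]
    have : ∀ i, q ^ (m + i) = q ^ m * q ^ i := fun i => pow_add q m i
    simp only [this, ← mul_sum]
    ring
  -- A ≥ 2
  have hA2 : 1 + q ≤ A := by
    have hsub : range 2 ⊆ range m := by
      apply Finset.range_subset_range.mpr hm2
    have := Finset.sum_le_sum_of_subset (f := fun i => q ^ i) hsub
    simpa [Finset.sum_range_succ] using this
  -- B ≥ 5
  have hqm4 : 4 ≤ q ^ m := by
    calc (4 : ℕ) = 2 ^ 2 := by norm_num
    _ ≤ q ^ 2 := Nat.pow_le_pow_left hq 2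
    _ ≤ q ^ m := Nat.pow_le_pow_right (by omega) hm2
  have hB5 : 5 ≤ B := by omega
  -- A, B are powers of p
  have hAdvd : A ∣ p ^ f := ⟨B, hfac.symm⟩
  have hBdvd : B ∣ p ^ f := ⟨A, by rw [← hfac]; ring⟩
  obtain ⟨a, ha_le, hA_eq⟩ := (Nat.dvd_prime_pow hp).mp hAdvd
  obtain ⟨b, hb_le, hB_eq⟩ := (Nat.dvd_prime_pow hp).mp hBdvd
  have ha1 : 1 ≤ a := by
    rcases Nat.eq_zero_or_pos a with h0 | h0
    · rw [h0, pow_zero] at hA_eq; omega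
    · exact h0
  have hb1 : 1 ≤ b := by
    rcases Nat.eq_zero_or_pos b with h0 | h0
    · rw [h0, pow_zero] at hB_eq; omega
    · exact h0
  have hpA : p ∣ A := hA_eq ▸ dvd_pow_self p (by omega)
  have hpB : p ∣ B := hB_eq ▸ dvd_pow_self p (by omega)
  -- p ∣ 2
  have hpqm1 : p ∣ q ^ m - 1 := by
    rw [← key m]
    exact Dvd.dvd.mul_left hpA (q - 1)
  have hqm1 : 1 ≤ q ^ m := Nat.one_le_pow _ _ (by omega)
  have hp2 : p ∣ 2 := by
    have := Nat.dvd_sub hpB hpqm1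
    have h2 : B - (q ^ m - 1) = 2 := by omega
    rwa [h2] at this
  have hpeq : p = 2 := (Nat.prime_dvd_prime_iff_eq hp Nat.prime_two).mp hp2
  subst hpeq
  -- q is odd
  have hqodd : q % 2 = 1 := by
    obtain ⟨c, hc⟩ := hpB
    by_contra hqe
    have hq2 : q % 2 = 0 := by omega
    have : q ^ m % 2 = 0 := by
      rw [Nat.pow_mod, hq2, Nat.zero_pow (by omega)]
    omega
  -- m is even
  have hAmod : A % 2 = m % 2 := parity_geom q hqodd m
  have hmeven : m % 2 = 0 := by
    obtain ⟨c, hc⟩ := hpA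
    omega
  obtain ⟨k, hk⟩ : ∃ k, m = 2 * k := ⟨m / 2, by omega⟩
  -- q^m ≡ 1 mod 4
  have hqk : q ^ k % 2 = 1 := by rw [Nat.pow_mod, hqodd, one_pow]; rfl
  obtain ⟨t, ht⟩ : ∃ t, q ^ k = 2 * t + 1 := ⟨q ^ k / 2, by omega⟩
  have hqm : q ^ m = 4 * (t * t + t) + 1 := by
    rw [hk, two_mul, pow_add, ht]; ring
  -- B ≡ 2 mod 4, but B = 2^b with b ≥ 2
  have hb2 : 2 ≤ b := by
    rcases Nat.lt_or_ge b 2 with hb | hb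
    · interval_cases b <;> omega
    · exact hb
  obtain ⟨b', hb'⟩ : ∃ b', b = b' + 2 := ⟨b - 2, by omega⟩
  have : B = 4 * 2 ^ b' := by
    rw [hB_eq, hb', pow_add]; ring
  omega
end

section
/- Let G be a finite group, p a prime, P a Sylow p-subgroup, and K a normal p-complement of G (i.e., K is a normal subgroup of order |G|/|P| with K ∩ P = 1 and G = KP). Let H = O^{p'}(G) be the smallest normal subgroup with quotient of order prime to p, and S = H ∩ K. Define L to be the intersection of all normal subgroups T of K such that P normalizes T and P acts trivially on K/T. Then L = S. -/
open Pointwise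
open scoped commutatorElement


theorem stmt6 {G : Type*} [Group G] [Fintype G] {p : ℕ} [Fact p.Prime]
    (P : Sylow p G) (K : Subgroup G) (hKn : K.Normal)
    (hcompl : Subgroup.IsComplement' K (P : Subgroup G))
    (H : Subgroup G) (hHn : H.Normal) (hHp : ¬ p ∣ H.index)
    (hHmin : ∀ H' : Subgroup G, H'.Normal → ¬ p ∣ H'.index → H ≤ H') :
    sInf {T : Subgroup G | T ≤ K ∧ K ≤ Subgroup.normalizer (T : Set G) ∧
        (P : Subgroup G) ≤ Subgroup.normalizer (T : Set G) ∧ ⁅(P : Subgroup G), K⁆ ≤ T}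
      = H ⊓ K := by
  have hsup : K ⊔ (P : Subgroup G) = ⊤ := hcompl.sup_eq_top
  -- P ≤ H
  have hPH : (P : Subgroup G) ≤ H := by
    intro x hx
    obtain ⟨k, hk⟩ := P.2 ⟨x, hx⟩
    have hk' : x ^ p ^ k = 1 := by
      have := congrArg (Subtype.val) hk
      simpa using this
    set y : G ⧸ H := QuotientGroup.mk' H x with hy
    have h1 : orderOf y ∣ p ^ k := by
      apply orderOf_dvd_of_pow_eq_one
      rw [hy, ← map_pow, hk', map_one]
    have h2 : orderOf y ∣ H.index := by
      rw [Subgroup.index_eq_card]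
      exact orderOf_dvd_natCard y
    have hcop : Nat.Coprime (p ^ k) H.index :=
      Nat.Coprime.pow_left _ ((Nat.Prime.coprime_iff_not_dvd Fact.out).mpr hHp)
    have : orderOf y = 1 := Nat.eq_one_of_dvd_coprimes hcop h1 h2
    have : y = 1 := orderOf_eq_one_iff.mp this
    exact (QuotientGroup.eq_one_iff x).mp this
  apply le_antisymm
  · -- sInf ≤ H ⊓ K : show H ⊓ K belongs to the set
    apply sInf_le
    have hn : (H ⊓ K).Normal := ⟨fun n hn g => ⟨hHn.conj_mem n hn.1 g, hKn.conj_mem n hn.2 g⟩⟩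
    refine ⟨inf_le_right, ?_, ?_, ?_⟩
    · rw [Subgroup.normalizer_eq_top_iff.mpr hn]; exact le_top
    · rw [Subgroup.normalizer_eq_top_iff.mpr hn]; exact le_top
    · refine le_inf ?_ (Subgroup.commutator_le_right _ _)
      calc ⁅(P : Subgroup G), K⁆ ≤ ⁅H, K⁆ := Subgroup.commutator_mono hPH le_rfl
        _ ≤ H := Subgroup.commutator_le_left _ _
  · apply le_sInf
    rintro T ⟨hTK, hKN, hPN, hComm⟩
    have hTnormal : T.Normal := by
      rw [← Subgroup.normalizer_eq_top_iff]
      exact top_unique (hsup ▸ sup_le hKN hPN)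
    set M : Subgroup G := T ⊔ (P : Subgroup G) with hM
    -- K normalizes M in the one-sided sense
    have hKconj : ∀ k ∈ K, ∀ n ∈ M, k * n * k⁻¹ ∈ M := by
      intro k hk n hn
      have hn' : (n : G) ∈ (T : Set G) * ((P : Subgroup G) : Set G) := by
        rw [← Subgroup.normal_mul]; exact hn
      obtain ⟨t, ht, q, hq, rfl⟩ := hn'
      have h1 : k * t * k⁻¹ ∈ T := by
        have := Subgroup.mem_normalizer_iff.mp (hKN hk)
        exact (this t).mp ht
      have h2 : k * q * k⁻¹ ∈ M := by
        have hc : ⁅k, q⁆ ∈ T := by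
          apply hComm
          have : ⁅k, q⁆ ∈ ⁅K, (P : Subgroup G)⁆ :=
            Subgroup.commutator_mem_commutator hk hq
          rwa [Subgroup.commutator_comm] at this
        have : k * q * k⁻¹ = ⁅k, q⁆ * q := by
          simp [commutatorElement_def, mul_assoc]
        rw [this]
        exact mul_mem (le_sup_left (a := T) (b := (P : Subgroup G)) hc)
          (le_sup_right (a := T) (b := (P : Subgroup G)) hq)
      have : k * (t * q) * k⁻¹ = (k * t * k⁻¹) * (k * q * k⁻¹) := by
        group
      rw [this]
      exact mul_mem (le_sup_left (a := T) (b := (P : Subgroup G)) h1) h2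
    have hMnormal : M.Normal := by
      rw [← Subgroup.normalizer_eq_top_iff]
      apply top_unique
      rw [← hsup]
      apply sup_le
      · intro k hk
        rw [Subgroup.mem_normalizer_iff]
        intro n
        constructor
        · exact fun hn => hKconj k hk n hn
        · intro hn
          have := hKconj k⁻¹ (inv_mem hk) _ hn
          simpa [mul_assoc] using this
      · exact le_trans le_sup_right Subgroup.le_normalizer
    have hMindex : ¬ p ∣ M.index := by
      intro hdvd
      have hle : (P : Subgroup G) ≤ M := le_sup_right
      have : M.index ∣ (P : Subgroup G).index := Subgroup.index_dvd_of_le hle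
      exact P.not_dvd_index (hdvd.trans this)
    have hHM : H ≤ M := hHmin M hMnormal hMindex
    -- now H ⊓ K ≤ T
    intro x hx
    have hxM : x ∈ M := hHM hx.1
    have hx' : (x : G) ∈ (T : Set G) * ((P : Subgroup G) : Set G) := by
      rw [← Subgroup.normal_mul]; exact hxM
    obtain ⟨t, ht, q, hq, rfl⟩ := hx'
    have hqK : q ∈ K := by
      have : t⁻¹ * (t * q) ∈ K := mul_mem (inv_mem (hTK ht)) hx.2
      simpa using this
    have : q ∈ K ⊓ (P : Subgroup G) := ⟨hqK, hq⟩
    have hq1 : q = 1 := by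
      have := hcompl.disjoint
      have hb : q ∈ (⊥ : Subgroup G) := by
        rw [← this.eq_bot]; exact ⟨hqK, hq⟩
      simpa using hb
    show t * q ∈ T
    rw [hq1, mul_one]
    exact ht
end

section
/- Let G be a finite group with normal p-complement K, H = O^{p'}(G), P a Sylow p-subgroup, and L as the intersection of all normal subgroups T of K normalized by P with [P,K] ≤ T. Then N_H(P) = P if and only if C_L(P) = 1. -/
open scoped commutatorElement

/-- Any subgroup `A` normalizes the commutator `⁅A, B⁆`. -/
lemma aux_conj_mem_commutator {G : Type*} [Group G] (A B : Subgroup G) {a x : G}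
    (ha : a ∈ A) (hx : x ∈ ⁅A, B⁆) : a * x * a⁻¹ ∈ ⁅A, B⁆ := by
  rw [Subgroup.commutator_def] at hx
  induction hx using Subgroup.closure_induction with
  | mem y hy =>
    obtain ⟨g₁, hg₁, g₂, hg₂, rfl⟩ := hy
    have key : a * ⁅g₁, g₂⁆ * a⁻¹ = ⁅a * g₁, g₂⁆ * ⁅a, g₂⁆⁻¹ := by
      simp only [commutatorElement_def]; group
    rw [key]
    exact mul_mem (Subgroup.commutator_mem_commutator (mul_mem ha hg₁) hg₂)
      (inv_mem (Subgroup.commutator_mem_commutator ha hg₂))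
  | one => simpa using one_mem _
  | mul y z hy hz hy' hz' =>
    have : a * (y * z) * a⁻¹ = (a * y * a⁻¹) * (a * z * a⁻¹) := by group
    rw [this]; exact mul_mem hy' hz'
  | inv y hy hy' =>
    have : a * y⁻¹ * a⁻¹ = (a * y * a⁻¹)⁻¹ := by group
    rw [this]; exact inv_mem hy'

lemma aux_left_le_normalizer_commutator {G : Type*} [Group G] (A B : Subgroup G) :
    A ≤ Subgroup.normalizer ((⁅A, B⁆ : Subgroup G) : Set G) := by
  intro a ha
  rw [Subgroup.mem_normalizer_iff]
  intro h
  constructor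
  · exact fun hh => aux_conj_mem_commutator A B ha hh
  · intro hh
    have := aux_conj_mem_commutator A B (inv_mem ha) hh
    simpa [mul_assoc] using this

lemma aux_right_le_normalizer_commutator {G : Type*} [Group G] (A B : Subgroup G) :
    B ≤ Subgroup.normalizer ((⁅A, B⁆ : Subgroup G) : Set G) := by
  rw [Subgroup.commutator_comm]
  exact aux_left_le_normalizer_commutator B A

theorem stmt7 {G : Type*} [Group G] [Fintype G] {p : ℕ} [Fact p.Prime]
    (P : Sylow p G) (K : Subgroup G) (hKn : K.Normal)
    (hcompl : Subgroup.IsComplement' K (P : Subgroup G))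
    (H : Subgroup G) (hHn : H.Normal) (hHp : ¬ p ∣ H.index)
    (hHmin : ∀ H' : Subgroup G, H'.Normal → ¬ p ∣ H'.index → H ≤ H')
    (L : Subgroup G)
    (hL : L = sInf {T : Subgroup G | T ≤ K ∧ K ≤ Subgroup.normalizer (T : Set G) ∧
        (P : Subgroup G) ≤ Subgroup.normalizer (T : Set G) ∧ ⁅(P : Subgroup G), K⁆ ≤ T}) :
    H ⊓ Subgroup.normalizer ((P : Subgroup G) : Set G) = (P : Subgroup G) ↔
      L ⊓ Subgroup.centralizer (P : Set G) = ⊥ := by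
  classical
  haveI := hKn
  haveI := hHn
  set P' : Subgroup G := (P : Subgroup G) with hP'
  set C : Subgroup G := ⁅P', K⁆ with hCdef
  -- basic facts
  have hCK : C ≤ K := Subgroup.commutator_le_right P' K
  have hKnormC : K ≤ Subgroup.normalizer (C : Set G) := aux_right_le_normalizer_commutator P' K
  have hPnormC : P' ≤ Subgroup.normalizer (C : Set G) := aux_left_le_normalizer_commutator P' K
  have hKP : K ⊔ P' = ⊤ := hcompl.sup_eq_top
  have hdisj : Disjoint K P' := hcompl.disjoint
  -- C is normal in G
  have hCnormal : C.Normal := by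
    rw [← Subgroup.normalizer_eq_top_iff]
    exact top_le_iff.mp (hKP ▸ sup_le hKnormC hPnormC)
  haveI := hCnormal
  -- L = C
  have hLC : L = C := by
    rw [hL]
    apply le_antisymm
    · exact sInf_le ⟨hCK, hKnormC, hPnormC, le_rfl⟩
    · exact le_sInf fun T hT => hT.2.2.2
  -- P ≤ H
  have hPH : P' ≤ H := by
    rw [← QuotientGroup.ker_mk' H, ← Subgroup.map_eq_bot_iff]
    set Q : Subgroup (G ⧸ H) := P'.map (QuotientGroup.mk' H) with hQ
    have hQp : IsPGroup p Q := (P.isPGroup').map _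
    obtain ⟨n, hn⟩ := IsPGroup.iff_card.mp hQp
    rcases Nat.eq_zero_or_pos n with h0 | h1
    · rw [← Subgroup.card_eq_one, hn, h0, pow_zero]
    · exfalso
      apply hHp
      have hdvd : Nat.card Q ∣ Nat.card (G ⧸ H) := Subgroup.card_subgroup_dvd_card Q
      rw [← Subgroup.index_eq_card] at hdvd
      exact dvd_trans (hn ▸ dvd_pow_self p h1.ne') hdvd
  -- H = C ⊔ P'
  have hCPle : C ⊔ P' ≤ H := by
    refine sup_le ?_ hPH
    exact le_trans (Subgroup.commutator_mono hPH le_top) (Subgroup.commutator_le_left H ⊤)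
  -- membership decomposition of C ⊔ P'
  have hmem : ∀ x ∈ C ⊔ P', ∃ c ∈ C, ∃ q ∈ P', c * q = x := by
    intro x hx
    have : x ∈ ((C ⊔ P' : Subgroup G) : Set G) := hx
    rw [Subgroup.normal_mul C P'] at this
    obtain ⟨c, hc, q, hq, hcq⟩ := this
    exact ⟨c, hc, q, hq, hcq⟩
  -- C ⊔ P' is normal
  have hconj : ∀ k ∈ K, ∀ x ∈ C ⊔ P', k * x * k⁻¹ ∈ C ⊔ P' := by
    intro k hk x hx
    obtain ⟨c, hc, q, hq, rfl⟩ := hmem x hx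
    have h1 : k * (c * q) * k⁻¹ = (k * c * k⁻¹) * (⁅k, q⁆ * q) := by
      simp only [commutatorElement_def]; group
    rw [h1]
    have h2 : k * c * k⁻¹ ∈ C := by
      have := (hKnormC hk) c
      exact this.mp hc
    have h3 : ⁅k, q⁆ ∈ C := by
      rw [hCdef, Subgroup.commutator_comm]
      exact Subgroup.commutator_mem_commutator hk hq
    exact mul_mem (Subgroup.mem_sup_left h2)
      (mul_mem (Subgroup.mem_sup_left h3) (Subgroup.mem_sup_right hq))
  have hCPnormal : (C ⊔ P').Normal := by
    rw [← Subgroup.normalizer_eq_top_iff]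
    rw [← top_le_iff, ← hKP]
    refine sup_le ?_ (le_trans le_sup_right Subgroup.le_normalizer)
    intro k hk
    rw [Subgroup.mem_normalizer_iff]
    intro h
    constructor
    · exact fun hh => hconj k hk h hh
    · intro hh
      have := hconj k⁻¹ (inv_mem hk) _ hh
      simpa [mul_assoc] using this
  -- index of C ⊔ P' is not divisible by p
  have hCPindex : ¬ p ∣ (C ⊔ P').index := by
    intro hdvd
    haveI : Finite (Sylow p G) := inferInstance
    exact P.not_dvd_index (dvd_trans hdvd (Subgroup.index_dvd_of_le le_sup_right))
  have hHCP : H = C ⊔ P' := le_antisymm (hHmin _ hCPnormal hCPindex) hCPle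
  -- the main equivalence
  constructor
  · intro hEq
    rw [hLC, eq_bot_iff]
    intro x hx
    obtain ⟨hxC, hxZ⟩ := hx
    have hxN : x ∈ Subgroup.normalizer (P' : Set G) := by
      rw [Subgroup.mem_normalizer_iff]
      intro h
      constructor
      · intro hh
        have := (Subgroup.mem_centralizer_iff.mp hxZ) h hh
        rw [← this, mul_assoc, mul_inv_cancel, mul_one]
        exact hh
      · intro hh
        have h2 := (Subgroup.mem_centralizer_iff.mp hxZ) _ hh
        -- h2 : (x*h*x⁻¹) * x = x * (x*h*x⁻¹)
        rw [mul_assoc (x * h) x⁻¹ x, inv_mul_cancel, mul_one] at h2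
        have h3 : h = x * h * x⁻¹ := mul_left_cancel h2
        rw [h3]; exact hh
    have hxH : x ∈ H := hHCP ▸ Subgroup.mem_sup_left hxC
    have hxP : x ∈ P' := hEq ▸ (Subgroup.mem_inf.mpr ⟨hxH, hxN⟩)
    have : x ∈ K ⊓ P' := ⟨hCK hxC, hxP⟩
    rw [Subgroup.mem_bot]
    exact Subgroup.mem_bot.mp (hdisj.le_bot this)
  · intro hbot
    apply le_antisymm
    · intro x hx
      obtain ⟨hxH, hxN⟩ := hx
      rw [hHCP] at hxH
      obtain ⟨c, hc, q, hq, rfl⟩ := hmem _ hxH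
      have hcN : c ∈ Subgroup.normalizer (P' : Set G) := by
        have : c = (c * q) * q⁻¹ := by group
        rw [this]
        exact mul_mem hxN (Subgroup.le_normalizer (inv_mem hq))
      have hcZ : c ∈ Subgroup.centralizer (P' : Set G) := by
        rw [Subgroup.mem_centralizer_iff]
        intro g hg
        have h1 : c * g * c⁻¹ * g⁻¹ ∈ P' := by
          exact mul_mem ((Subgroup.mem_normalizer_iff.mp hcN g).mp hg) (inv_mem hg)
        have h2 : c * g * c⁻¹ * g⁻¹ ∈ K := by
          have hcK : c ∈ K := hCK hc
          have : c * (g * c⁻¹ * g⁻¹) ∈ K :=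
            mul_mem hcK (by simpa [mul_assoc] using hKn.conj_mem c⁻¹ (inv_mem hcK) g)
          simpa [mul_assoc] using this
        have : c * g * c⁻¹ * g⁻¹ ∈ K ⊓ P' := ⟨h2, h1⟩
        have h3 : c * g * c⁻¹ * g⁻¹ = 1 := Subgroup.mem_bot.mp (hdisj.le_bot this)
        have : c * g = g * c := by
          have h4 : c * g = (c * g * c⁻¹ * g⁻¹) * (g * c) := by group
          rw [h4, h3, one_mul]
        exact this.symm
      have : c ∈ L ⊓ Subgroup.centralizer (P' : Set G) := ⟨hLC ▸ hc, hcZ⟩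
      have hc1 : c = 1 := Subgroup.mem_bot.mp (hbot ▸ this)
      rw [hc1, one_mul]
      exact hq
    · exact le_inf hPH Subgroup.le_normalizer
end

section
/- Let G = GL(n,q) with n ≥ 3 and suppose (q^n-1)/(q-1) = p^f for a prime p. Then p^f = |G|_p, i.e., the full p-part of |GL(n,q)| equals (q^n-1)/(q-1). -/
open Finset

-- L1: geometric sum identity in ℕ
lemma geomN {q : ℕ} (hq : 1 ≤ q) (n : ℕ) :
    (q - 1) * ∑ i ∈ range n, q ^ i = q ^ n - 1 := by
  induction n with
  | zero => simp
  | succ k ih =>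
    rw [Finset.sum_range_succ, Nat.mul_add, ih]
    have h1 : 1 ≤ q ^ k := Nat.one_le_pow _ _ hq
    have h2 : q ^ (k + 1) = q * q ^ k := by ring
    have h3 : (q - 1) * q ^ k = q * q ^ k - q ^ k := by
      rw [Nat.sub_mul, one_mul]
    have h4 : q ^ k ≤ q * q ^ k := Nat.le_mul_of_pos_left _ (by omega)
    omega

-- L2: splitting geometric sum
lemma geomSplit (q a b : ℕ) :
    ∑ i ∈ range (a * b), q ^ i
      = (∑ i ∈ range a, q ^ i) * ∑ j ∈ range b, (q ^ a) ^ j := by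
  induction b with
  | zero => simp
  | succ k ih =>
    have h : a * (k + 1) = a * k + a := by ring
    rw [h, Finset.sum_range_add, ih, Finset.sum_range_succ, Nat.mul_add]
    congr 1
    rw [Finset.sum_mul]
    refine Finset.sum_congr rfl fun i _ => ?_
    rw [pow_add, pow_mul]
    ring

-- L3: parity of geometric sum
lemma geomParity {q : ℕ} (hq : q % 2 = 1) (n : ℕ) :
    (∑ i ∈ range n, q ^ i) % 2 = n % 2 := by
  rw [Finset.sum_nat_mod]
  have h : ∀ i ∈ range n, q ^ i % 2 = 1 := fun i _ => by
    rw [Nat.pow_mod, hq, one_pow]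
    norm_num
  rw [Finset.sum_congr rfl h, Finset.sum_const, card_range, smul_eq_mul]
  omega

-- L4
lemma two_pow_big {m : ℕ} (hm : 2 ≤ m) : m + 2 ≤ 2 ^ m := by
  induction m, hm using Nat.le_induction with
  | base => norm_num
  | succ k hk ih =>
    have h2 : 2 ^ (k + 1) = 2 * 2 ^ k := by ring
    omega

-- core lemma for odd p
lemma core {p Q m e : ℕ} (hp : p.Prime) (hodd : Odd p) (hQ : 2 ≤ Q) (hm : 2 ≤ m)
    (hpQ : p ∣ Q - 1) (hS : ∑ i ∈ range m, Q ^ i = p ^ e) : False := by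
  haveI : Fact p.Prime := ⟨hp⟩
  have hp2 : 2 ≤ p := hp.two_le
  have hpQ' : ¬ p ∣ Q := by
    intro hd
    have h1 : p ∣ Q - (Q - 1) := Nat.dvd_sub hd hpQ
    rw [Nat.sub_sub_self (by omega)] at h1
    have := Nat.le_of_dvd one_pos h1
    omega
  have hlte : padicValNat p (Q ^ m - 1 ^ m)
      = padicValNat p (Q - 1) + padicValNat p m :=
    padicValNat.pow_sub_pow hodd (by omega) (by simpa) hpQ' (by omega)
  have hfac : Q ^ m - 1 = (Q - 1) * p ^ e := by
    have h0 := geomN (show 1 ≤ Q by omega) m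
    rw [hS] at h0
    omega
  have hv : padicValNat p ((Q - 1) * p ^ e)
      = padicValNat p (Q - 1) + e := by
    rw [padicValNat.mul (by omega) (pow_ne_zero e (by omega)), padicValNat.prime_pow]
  have he : e = padicValNat p m := by
    rw [one_pow, hfac, hv] at hlte
    omega
  have hdvd : p ^ e ∣ m := he ▸ pow_padicValNat_dvd
  have hle : p ^ e ≤ m := Nat.le_of_dvd (by omega) hdvd
  have hge : 2 ^ m - 1 ≤ p ^ e := by
    rw [← hS]
    calc 2 ^ m - 1 = (2 - 1) * ∑ i ∈ range m, 2 ^ i := (geomN (by norm_num) m).symm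
    _ = ∑ i ∈ range m, 2 ^ i := by norm_num
    _ ≤ ∑ i ∈ range m, Q ^ i :=
        Finset.sum_le_sum fun i _ => Nat.pow_le_pow_left hQ i
  have := two_pow_big hm
  omega

-- the p = 2 case is impossible
lemma no_two {q n f : ℕ} (hq : 2 ≤ q) (hn : 3 ≤ n) (hf : 0 < f)
    (hS : ∑ i ∈ range n, q ^ i = 2 ^ f) : False := by
  have h2S : 2 ∣ ∑ i ∈ range n, q ^ i := hS ▸ dvd_pow_self 2 hf.ne'
  -- q is odd
  have hqodd : q % 2 = 1 := by
    rcases Nat.even_or_odd q with he | ho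
    · exfalso
      obtain ⟨k, rfl⟩ : ∃ k, n = k + 1 := ⟨n - 1, by omega⟩
      rw [geom_sum_succ] at h2S
      have h1 : 2 ∣ q * ∑ i ∈ range k, q ^ i :=
        Dvd.dvd.mul_right (even_iff_two_dvd.mp he) _
      omega
    · obtain ⟨t, rfl⟩ := ho
      omega
  -- n is even
  have hne : n % 2 = 0 := by
    have := geomParity hqodd n
    omega
  obtain ⟨m, hm⟩ : ∃ m, n = 2 * m := ⟨n / 2, by omega⟩
  have hm2 : 2 ≤ m := by omega
  have hq4 : 4 ≤ q ^ 2 := by nlinarith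
  -- T divides 2^f and is even, so m is even
  have hsplit : ∑ i ∈ range n, q ^ i
      = (∑ i ∈ range 2, q ^ i) * ∑ j ∈ range m, (q ^ 2) ^ j := by
    rw [hm]; exact geomSplit q 2 m
  have hTdvd : (∑ j ∈ range m, (q ^ 2) ^ j) ∣ 2 ^ f :=
    hS ▸ hsplit ▸ Dvd.intro_left _ rfl
  obtain ⟨e, he, hTe⟩ := (Nat.dvd_prime_pow Nat.prime_two).1 hTdvd
  have hq2odd : q ^ 2 % 2 = 1 := by simp [Nat.pow_mod, hqodd]
  have h12 : ∑ j ∈ range 2, (q ^ 2) ^ j = 1 + q ^ 2 := by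
    simp [Finset.sum_range_succ]
  have hTbig : 2 ≤ ∑ j ∈ range m, (q ^ 2) ^ j := by
    have hsub : (∑ j ∈ range 2, (q ^ 2) ^ j) ≤ ∑ j ∈ range m, (q ^ 2) ^ j :=
      Finset.sum_le_sum_of_subset (Finset.range_subset_range.2 hm2)
    rw [h12] at hsub
    omega
  have he1 : 1 ≤ e := by
    rcases Nat.eq_zero_or_pos e with rfl | h
    · simp at hTe; omega
    · omega
  have hTeven : (∑ j ∈ range m, (q ^ 2) ^ j) % 2 = 0 := by
    have h1 : 2 ∣ 2 ^ e := dvd_pow_self 2 (by omega)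
    omega
  have hme : m % 2 = 0 := by
    have := geomParity hq2odd m
    omega
  obtain ⟨k, hk⟩ : ∃ k, n = 4 * k := ⟨m / 2, by omega⟩
  -- now (1+q)(1+q^2) divides 2^f
  have hsplit4 : ∑ i ∈ range n, q ^ i
      = (∑ i ∈ range 4, q ^ i) * ∑ j ∈ range k, (q ^ 4) ^ j := by
    rw [hk]; exact geomSplit q 4 k
  have hVdvd : (∑ i ∈ range 4, q ^ i) ∣ 2 ^ f := hS ▸ hsplit4 ▸ Dvd.intro _ rfl
  have hVeq : ∑ i ∈ range 4, q ^ i = (1 + q) * (1 + q ^ 2) := by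
    simp [Finset.sum_range_succ]; ring
  have hWdvd : (1 + q ^ 2) ∣ 2 ^ f :=
    dvd_trans (Dvd.intro_left _ rfl) (hVeq ▸ hVdvd)
  obtain ⟨b, hb, hWb⟩ := (Nat.dvd_prime_pow Nat.prime_two).1 hWdvd
  have hq2mod4 : q ^ 2 % 4 = 1 := by
    obtain ⟨t, ht⟩ : ∃ t, q = 2 * t + 1 := ⟨q / 2, by omega⟩
    have : q ^ 2 = 4 * (t * t + t) + 1 := by subst ht; ring
    omega
  have hb3 : 3 ≤ b := by
    by_contra hc
    push_neg at hc
    interval_cases b <;> norm_num at hWb <;> omega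
  have h4 : (4 : ℕ) ∣ 2 ^ b := by
    have h5 : (2 : ℕ) ^ 2 ∣ 2 ^ b := pow_dvd_pow 2 (by omega)
    simpa using h5
  omega

theorem stmt15 (n q f p : ℕ) (hn : 3 ≤ n) (hp : p.Prime) (hf : 0 < f)
    (F : Type) [Field F] [Fintype F] (hq : q = Fintype.card F)
    (h : (q ^ n - 1) / (q - 1) = p ^ f) :
    (Nat.card (GL (Fin n) F)).factorization p = f := by
  have hq2 : 2 ≤ q := hq ▸ Fintype.one_lt_card
  have hgeom := geomN (show 1 ≤ q by omega) n
  have hS : ∑ i ∈ range n, q ^ i = p ^ f := by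
    rw [← h, ← hgeom, Nat.mul_div_cancel_left _ (by omega : 0 < q - 1)]
  have hp2 : p ≠ 2 := by
    rintro rfl
    exact no_two hq2 hn hf hS
  have hodd : Odd p := hp.odd_of_ne_two hp2
  haveI : Fact p.Prime := ⟨hp⟩
  have hple := hp.two_le
  -- the multiplicative order of q mod p
  set d := orderOf ((q : ℕ) : ZMod p) with hd
  have hiff : ∀ k, (p ∣ q ^ k - 1 ↔ d ∣ k) := by
    intro k
    have h1 : (1 : ℕ) ≤ q ^ k := Nat.one_le_pow _ _ (by omega)
    rw [hd, orderOf_dvd_iff_pow_eq_one, ← ZMod.natCast_eq_zero_iff,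
      Nat.cast_sub h1, Nat.cast_pow, Nat.cast_one, sub_eq_zero, eq_comm]
  have hqn1 : q ^ n - 1 = (q - 1) * p ^ f := by rw [← hgeom, hS]
  have hpqn : p ∣ q ^ n - 1 := by
    rw [hqn1]
    exact Dvd.dvd.mul_left (dvd_pow_self p hf.ne') _
  have hdn : d ∣ n := (hiff n).1 hpqn
  have hd0 : d ≠ 0 := by
    rintro h0
    rw [h0] at hdn
    omega
  have hdnn : d = n := by
    by_contra hne
    have hdlt : d < n := lt_of_le_of_ne (Nat.le_of_dvd (by omega) hdn) hne
    obtain ⟨m, hm⟩ := hdn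
    have hm2 : 2 ≤ m := by
      rcases m with _ | _ | m <;> omega
    have hQ2 : 2 ≤ q ^ d := by
      calc 2 ≤ q := hq2
      _ = q ^ 1 := (pow_one q).symm
      _ ≤ q ^ d := Nat.pow_le_pow_right (by omega) (by omega)
    have hsplit : ∑ i ∈ range n, q ^ i
        = (∑ i ∈ range d, q ^ i) * ∑ j ∈ range m, (q ^ d) ^ j := by
      rw [hm]; exact geomSplit q d m
    have hTdvd : (∑ j ∈ range m, (q ^ d) ^ j) ∣ p ^ f :=
      hS ▸ hsplit ▸ Dvd.intro_left _ rfl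
    obtain ⟨e, _, hTe⟩ := (Nat.dvd_prime_pow hp).1 hTdvd
    exact core hp hodd hQ2 hm2 ((hiff d).2 dvd_rfl) hTe
  -- p does not divide q
  have hpq : ¬ p ∣ q := by
    intro hdq
    have h1 : p ∣ q ^ n := dvd_pow hdq (by omega)
    have h2 : p ∣ q ^ n - (q ^ n - 1) := Nat.dvd_sub h1 hpqn
    have h3 : q ^ n - (q ^ n - 1) = 1 := by
      have := Nat.one_le_pow n q (by omega)
      omega
    rw [h3] at h2
    have := Nat.le_of_dvd one_pos h2
    omega
  -- p does not divide q - 1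
  have hpq1 : ¬ p ∣ q - 1 := by
    intro hdq
    have h1 : d ∣ 1 := (hiff 1).1 (by simpa using hdq)
    have h2 : d = 1 := Nat.dvd_one.mp h1
    omega
  -- compute the factorization
  subst hq
  rw [Matrix.card_GL_field,
    Fin.prod_univ_eq_prod_range (fun i => Fintype.card F ^ n - Fintype.card F ^ i) n]
  have hfactors : ∀ i ∈ range n, Fintype.card F ^ n - Fintype.card F ^ i ≠ 0 := by
    intro i hi
    have : Fintype.card F ^ i < Fintype.card F ^ n :=
      Nat.pow_lt_pow_right (by omega) (mem_range.1 hi)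
    omega
  rw [Nat.factorization_prod hfactors, Finsupp.finset_sum_apply]
  have hterm : ∀ i ∈ range n,
      (Fintype.card F ^ n - Fintype.card F ^ i).factorization p
        = if i = 0 then f else 0 := by
    intro i hi
    have hilt := mem_range.1 hi
    rcases Nat.eq_zero_or_pos i with rfl | hipos
    · simp only [pow_zero, if_true, reduceIte]
      rw [hqn1, Nat.factorization_mul (by omega) (pow_ne_zero f (by omega)),
        Finsupp.add_apply, Nat.factorization_eq_zero_of_not_dvd hpq1,
        hp.factorization_pow, Finsupp.single_eq_same]
      omega
    · have hne0 : i ≠ 0 := by omega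
      simp only [hne0, if_false, reduceIte]
      have hsplit : Fintype.card F ^ n - Fintype.card F ^ i
          = Fintype.card F ^ i * (Fintype.card F ^ (n - i) - 1) := by
        rw [Nat.mul_sub, mul_one, ← pow_add]
        congr 2
        omega
      have h1le : (1 : ℕ) ≤ Fintype.card F ^ (n - i) := Nat.one_le_pow _ _ (by omega)
      rw [hsplit, Nat.factorization_mul (pow_ne_zero i (by omega)) (by
          have : Fintype.card F ^ (n - i) > 1 :=
            Nat.one_lt_pow (by omega) (by omega)
          omega),
        Finsupp.add_apply,
        Nat.factorization_eq_zero_of_not_dvd (fun hc => hpq (hp.dvd_of_dvd_pow hc)),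
        Nat.factorization_eq_zero_of_not_dvd (fun hc => by
          have := (hiff (n - i)).1 hc
          rw [hdnn] at this
          have := Nat.le_of_dvd (by omega) this
          omega)]
  rw [Finset.sum_congr rfl hterm, Finset.sum_ite_eq' (range n) 0 (fun _ => f)]
  rw [if_pos (mem_range.2 (by omega))]
end

section
/- Let G be a finite group, p a prime, and suppose Φ_1(1) = |G|_p where Φ_1 is the character of the projective cover of the trivial module in characteristic p. If there exists an irreducible Brauer character β of G that is not a constituent of Φ_1 but whose projective character Φ_β is a summand of Φ_1·Φ_1, then there exists an irreducible constituent φ of Φ_1 with Φ_φ(1)/|G|_p < φ(1). -/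
open CategoryTheory MonoidalCategory Module

namespace Stmt18Aux

variable {G F : Type} [Group G] [Field F]

/-- The underlying linear map of a morphism, with specified domain/codomain types. -/
def fh {V W : FDRep F G} (f : V ⟶ W) : V →ₗ[F] W := f.hom.hom.hom

theorem hom_ext {V W : FDRep F G} {f g : V ⟶ W} (h : fh f = fh g) : f = g := by
  ext : 1; exact FGModuleCat.hom_ext h

theorem fh_comm {V W : FDRep F G} (f : V ⟶ W) (g : G) (v : V) :
    fh f (V.ρ g v) = W.ρ g (fh f v) :=
  congrArg (fun l => l.hom.hom v) (f.comm g)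

@[simp] theorem fh_zero {V W : FDRep F G} : fh (0 : V ⟶ W) = 0 := rfl

@[simp] theorem fh_id {V : FDRep F G} : fh (𝟙 V) = LinearMap.id := rfl

@[simp] theorem fh_comp {V W X : FDRep F G} (f : V ⟶ W) (g : W ⟶ X) :
    fh (f ≫ g) = (fh g) ∘ₗ (fh f) := rfl

@[simp] theorem fh_add {V W : FDRep F G} (f g : V ⟶ W) : fh (f + g) = fh f + fh g := rfl

@[simp] theorem fh_neg {V W : FDRep F G} (f : V ⟶ W) : fh (-f) = -(fh f) := rfl

@[simp] theorem fh_sub {V W : FDRep F G} (f g : V ⟶ W) : fh (f - g) = fh f - fh g := by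
  rw [sub_eq_add_neg, sub_eq_add_neg, fh_add, fh_neg]

/-- Build a morphism of `FDRep` from an equivariant linear map. -/
def mkHom {V W : FDRep F G} (l : V →ₗ[F] W)
    (hl : ∀ (g : G) (v : V), l (V.ρ g v) = W.ρ g (l v)) : V ⟶ W where
  hom := FGModuleCat.ofHom l
  comm g := by
    ext v
    exact hl g v

@[simp] theorem fh_mkHom {V W : FDRep F G} (l : V →ₗ[F] W) (hl) :
    fh (mkHom l hl) = l := rfl

theorem epi_of_surjective {V W : FDRep F G} (f : V ⟶ W)
    (h : Function.Surjective (fh f)) : Epi f := by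
  constructor
  intro Z a b hab
  apply hom_ext
  ext w
  obtain ⟨v, rfl⟩ := h w
  have := congrArg (fun (m : V ⟶ Z) => fh m v) hab
  simpa using this

theorem mono_of_injective {V W : FDRep F G} (f : V ⟶ W)
    (h : Function.Injective (fh f)) : Mono f := by
  constructor
  intro Z a b hab
  apply hom_ext
  ext z
  have := congrArg (fun (m : Z ⟶ W) => fh m z) hab
  exact h (by simpa using this)

/-- The subrepresentation on an invariant submodule. -/
noncomputable def subrep (W : FDRep F G) (U : Submodule F W)
    (hU : ∀ (g : G), ∀ u ∈ U, W.ρ g u ∈ U) : FDRep F G :=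
  FDRep.of
    ({ toFun := fun g => (W.ρ g).restrict (fun u hu => hU g u hu)
       map_one' := by
         ext u
         simp
       map_mul' := fun g h => by
         ext u
         simp [LinearMap.restrict_apply] } : Representation F G U)

/-- The inclusion of a subrepresentation. -/
noncomputable def subrepIncl (W : FDRep F G) (U : Submodule F W) (hU) :
    subrep W U hU ⟶ W :=
  mkHom (U.subtype) (fun _ _ => rfl)

theorem fh_subrepIncl (W : FDRep F G) (U : Submodule F W) (hU) :
    fh (subrepIncl W U hU) = U.subtype := rfl

instance subrepIncl_mono (W : FDRep F G) (U : Submodule F W) (hU) :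
    Mono (subrepIncl W U hU) :=
  mono_of_injective _ (Subtype.coe_injective)

theorem finrank_subrep (W : FDRep F G) (U : Submodule F W) (hU) :
    finrank F (subrep W U hU) = finrank F U := rfl

/-- The quotient representation. -/
noncomputable def quotrep (W : FDRep F G) (U : Submodule F W)
    (hU : ∀ (g : G), ∀ u ∈ U, W.ρ g u ∈ U) : FDRep F G :=
  FDRep.of
    ({ toFun := fun g => Submodule.mapQ U U (W.ρ g) (fun u hu => hU g u hu)
       map_one' := by
         ext u
         simp
       map_mul' := fun g h => by
         ext u
         simp } : Representation F G (W ⧸ U))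

/-- The projection onto a quotient representation. -/
noncomputable def quotrepProj (W : FDRep F G) (U : Submodule F W) (hU) :
    W ⟶ quotrep W U hU :=
  mkHom U.mkQ (fun g v => by
    show U.mkQ ((W.ρ g) v) = Submodule.mapQ U U (W.ρ g) (fun u hu => hU g u hu) (U.mkQ v)
    simp [Submodule.mapQ_apply])

theorem fh_quotrepProj (W : FDRep F G) (U : Submodule F W) (hU) :
    fh (quotrepProj W U hU) = U.mkQ := rfl

theorem surjective_of_epi {V W : FDRep F G} (f : V ⟶ W) (h : Epi f) :
    Function.Surjective (fh f) := by
  have hinv : ∀ (g : G), ∀ u ∈ LinearMap.range (fh f), W.ρ g u ∈ LinearMap.range (fh f) := by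
    rintro g u ⟨v, rfl⟩
    exact ⟨V.ρ g v, fh_comm f g v⟩
  by_contra hsurj
  have hne : LinearMap.range (fh f) ≠ ⊤ := by
    intro htop
    exact hsurj (LinearMap.range_eq_top.mp htop)
  have hzero : quotrepProj W (LinearMap.range (fh f)) hinv = 0 := by
    rw [← cancel_epi f]
    apply hom_ext
    rw [fh_comp, fh_comp, fh_zero]
    ext v
    show (LinearMap.range (fh f)).mkQ ((fh f) v) = 0
    simp [Submodule.Quotient.mk_eq_zero]
  apply hne
  rw [Submodule.eq_top_iff']
  intro w
  have := DFunLike.congr_fun (congrArg fh hzero) w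
  rw [fh_quotrepProj, fh_zero] at this
  simp only [LinearMap.zero_apply] at this
  exact (Submodule.Quotient.mk_eq_zero _).mp this

theorem injective_of_mono {V W : FDRep F G} (f : V ⟶ W) (h : Mono f) :
    Function.Injective (fh f) := by
  have hinv : ∀ (g : G), ∀ u ∈ LinearMap.ker (fh f), V.ρ g u ∈ LinearMap.ker (fh f) := by
    intro g u hu
    simp only [LinearMap.mem_ker] at hu ⊢
    rw [fh_comm f g u, hu, map_zero]
  have hzero : subrepIncl V (LinearMap.ker (fh f)) hinv = 0 := by
    rw [← cancel_mono f]
    apply hom_ext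
    rw [fh_comp, fh_comp, fh_zero]
    ext ⟨v, hv⟩
    exact (LinearMap.mem_ker.mp hv).trans (map_zero (fh f)).symm
  rw [← LinearMap.ker_eq_bot, Submodule.eq_bot_iff]
  intro v hv
  have := DFunLike.congr_fun (congrArg fh hzero) ⟨v, hv⟩
  rw [fh_subrepIncl, fh_zero] at this
  exact this

/-- An FDRep morphism with bijective underlying map is an isomorphism. -/
theorem isIso_of_bijective {V W : FDRep F G} (f : V ⟶ W)
    (h : Function.Bijective (fh f)) : IsIso f := by
  let e := LinearEquiv.ofBijective (fh f) h
  let s : W →ₗ[F] V := e.symm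
  have hs : ∀ w : W, fh f (s w) = w := fun w => e.apply_symm_apply w
  have hs' : ∀ v : V, s (fh f v) = v := fun v => e.symm_apply_apply v
  have hcomm : ∀ (g : G) (w : W), s (W.ρ g w) = V.ρ g (s w) := by
    intro g w
    apply h.1
    show fh f _ = fh f _
    rw [hs, fh_comm, hs]
  refine ⟨mkHom s hcomm, ?_, ?_⟩
  · apply hom_ext
    show s ∘ₗ (fh f) = LinearMap.id
    ext v
    exact hs' v
  · apply hom_ext
    show (fh f) ∘ₗ s = LinearMap.id
    ext w
    exact hs w

/-- A retract of a projective object is projective. -/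
theorem projective_of_retract {Q W : FDRep F G} (m : Q ⟶ W) (r : W ⟶ Q)
    (hmr : m ≫ r = 𝟙 Q) (hW : Projective W) : Projective Q := by
  constructor
  intro E X f e he
  obtain ⟨t, ht⟩ := hW.factors (r ≫ f) e
  exact ⟨m ≫ t, by rw [Category.assoc, ht, ← Category.assoc, hmr, Category.id_comp]⟩


theorem fh_whiskerLeft (X : FDRep F G) {V W : FDRep F G} (f : V ⟶ W) :
    fh (X ◁ f) = LinearMap.lTensor X (fh f) := rfl

theorem fh_whiskerRight {V W : FDRep F G} (f : V ⟶ W) (X : FDRep F G) :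
    fh (f ▷ X) = LinearMap.rTensor X (fh f) := rfl

theorem epi_whiskerLeft (X : FDRep F G) {V W : FDRep F G} (f : V ⟶ W) (h : Epi f) :
    Epi (X ◁ f) := by
  apply epi_of_surjective
  rw [fh_whiskerLeft]
  exact LinearMap.lTensor_surjective _ (surjective_of_epi f h)

/-- Tensoring a projective object (on the right) by anything is projective. -/
theorem projective_tensor (V P : FDRep F G) (hP : Projective P) :
    Projective (V ⊗ P : FDRep F G) := by
  constructor
  letI : HasLeftDual V := BraidedCategory.hasLeftDualOfHasRightDual (X := V)
  intro E X f e he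
  let f' : P ⟶ (ᘁV) ⊗ X := (tensorLeftHomEquiv P (ᘁV) V X) f
  haveI : Epi ((ᘁV) ◁ e) := epi_whiskerLeft _ e he
  obtain ⟨g', hg'⟩ := hP.factors f' ((ᘁV) ◁ e)
  refine ⟨(tensorLeftHomEquiv P (ᘁV) V E).symm g', ?_⟩
  apply (tensorLeftHomEquiv P (ᘁV) V X).injective
  rw [tensorLeftHomEquiv_naturality]
  simp [f', hg']

theorem finrank_pos_of_simple (S : FDRep F G) (hS : Simple S) : 0 < finrank F S := by
  rcases Nat.eq_zero_or_pos (finrank F S) with h | h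
  · exfalso
    haveI : Subsingleton S := Module.finrank_zero_iff.mp h
    apply CategoryTheory.id_nonzero S
    apply hom_ext
    ext v
    exact Subsingleton.elim _ _
  · exact h

theorem zero_or_epi {X S : FDRep F G} (f : X ⟶ S) (hS : Simple S) : f = 0 ∨ Epi f := by
  by_cases hf : f = 0
  · exact Or.inl hf
  right
  have hinv : ∀ (g : G), ∀ u ∈ LinearMap.range (fh f), S.ρ g u ∈ LinearMap.range (fh f) := by
    rintro g u ⟨v, rfl⟩
    refine ⟨X.ρ g v, ?_⟩
    exact fh_comm f g v
  set U := LinearMap.range (fh f) with hU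
  have hUne : U ≠ ⊥ := by
    intro hbot
    apply hf
    apply hom_ext
    ext v
    have : fh f v ∈ U := ⟨v, rfl⟩
    rw [hbot] at this
    simpa using this
  haveI : Mono (subrepIncl S U hinv) := subrepIncl_mono S U hinv
  have hne : subrepIncl S U hinv ≠ 0 := by
    obtain ⟨u, hu, hune⟩ := Submodule.exists_mem_ne_zero_of_ne_bot hUne
    intro h0
    apply hune
    have := DFunLike.congr_fun (congrArg fh h0) ⟨u, hu⟩
    rw [fh_subrepIncl] at this
    exact this
  haveI : IsIso (subrepIncl S U hinv) := isIso_of_mono_of_nonzero hne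
  apply epi_of_surjective
  intro s
  have : s ∈ U := by
    have h1 : fh (inv (subrepIncl S U hinv) ≫ subrepIncl S U hinv) s = s := by
      rw [IsIso.inv_hom_id]; rfl
    rw [show fh (inv (subrepIncl S U hinv) ≫ subrepIncl S U hinv)
        = (fh (subrepIncl S U hinv)) ∘ₗ (fh (inv (subrepIncl S U hinv))) from rfl] at h1
    rw [fh_subrepIncl] at h1
    rw [← h1]
    exact Submodule.coe_mem _
  exact this

theorem epi_idem_eq_id {W : FDRep F G} (e : W ⟶ W) (hee : e ≫ e = e) (he : Epi e) : e = 𝟙 W := by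
  apply (cancel_epi e).mp
  rw [hee, Category.comp_id]


theorem exists_pow_range_stab {F E : Type} [Field F] [AddCommGroup E] [Module F E]
    [FiniteDimensional F E] (ψ : E →ₗ[F] E) :
    ∃ n, 0 < n ∧ ∀ m, n ≤ m → LinearMap.range (ψ^m) = LinearMap.range (ψ^n) := by
  have hdec : ∀ k, LinearMap.range (ψ^(k+1)) ≤ LinearMap.range (ψ^k) := by
    intro k
    rw [pow_succ, Module.End.mul_eq_comp]
    exact LinearMap.range_comp_le_range _ _
  have key : ∃ n, 0 < n ∧ LinearMap.range (ψ^(n+1)) = LinearMap.range (ψ^n) := by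
    by_contra hc
    push_neg at hc
    have hstrict : ∀ n, 0 < n →
        finrank F (LinearMap.range (ψ^(n+1))) < finrank F (LinearMap.range (ψ^n)) := by
      intro n hn
      exact Submodule.finrank_lt_finrank_of_lt (lt_of_le_of_ne (hdec n) (hc n hn))
    have hbound : ∀ k, finrank F (LinearMap.range (ψ^(k+1))) + k ≤
        finrank F (LinearMap.range (ψ^1)) := by
      intro k
      induction k with
      | zero => simp
      | succ k ih =>
        have := hstrict (k+1) (Nat.succ_pos k)
        omega
    have := hbound (finrank F (LinearMap.range (ψ^1)) + 1)
    omega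
  obtain ⟨n, hn, hstab⟩ := key
  refine ⟨n, hn, ?_⟩
  intro m hm
  induction m with
  | zero => omega
  | succ m ih =>
    rcases Nat.lt_or_ge n (m+1) with h | h
    · have hnm : n ≤ m := by omega
      have ihm := ih hnm
      have h1 : LinearMap.range (ψ^(m+1)) = Submodule.map ψ (LinearMap.range (ψ^m)) := by
        rw [pow_succ', Module.End.mul_eq_comp, LinearMap.range_comp]
      have h2 : LinearMap.range (ψ^(n+1)) = Submodule.map ψ (LinearMap.range (ψ^n)) := by
        rw [pow_succ', Module.End.mul_eq_comp, LinearMap.range_comp]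
      rw [h1, ihm, ← h2, hstab]
    · have : n = m + 1 := by omega
      rw [this]

noncomputable def epow {W : FDRep F G} (e : W ⟶ W) : ℕ → (W ⟶ W)
  | 0 => 𝟙 W
  | n+1 => e ≫ epow e n

theorem fh_epow {W : FDRep F G} (e : W ⟶ W) (n : ℕ) : fh (epow e n) = (fh e)^n := by
  induction n with
  | zero => rfl
  | succ n ih =>
    show fh (e ≫ epow e n) = _
    rw [fh_comp, ih, pow_succ, Module.End.mul_eq_comp]

theorem epow_comp_eq {W V : FDRep F G} (e : W ⟶ W) (π : W ⟶ V) (heπ : e ≫ π = π) (n : ℕ) :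
    epow e n ≫ π = π := by
  induction n with
  | zero => exact Category.id_comp π
  | succ n ih =>
    show (e ≫ epow e n) ≫ π = π
    rw [Category.assoc, ih, heπ]

/-- Existence of a projective cover inside a given projective `W` mapping onto a simple `V`. -/
theorem cover_exists (d : ℕ) : ∀ (W V : FDRep F G), Projective W → Simple V →
    ∀ (π : W ⟶ V), Epi π → finrank F W ≤ d →
    ∃ (Q : FDRep F G) (m : Q ⟶ W) (r : W ⟶ Q) (πQ : Q ⟶ V),
      m ≫ r = 𝟙 Q ∧ Projective Q ∧ Epi πQ ∧
      (∀ (Q' : FDRep F G) (g : Q' ⟶ Q), Epi (g ≫ πQ) → Epi g) := by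
  induction d with
  | zero =>
    intro W V hW hV π hπ hle
    exfalso
    have h1 := LinearMap.finrank_range_le (fh π)
    rw [LinearMap.range_eq_top.mpr (surjective_of_epi π hπ)] at h1
    rw [finrank_top] at h1
    have h2 := finrank_pos_of_simple V hV
    omega
  | succ d ih =>
    intro W V hW hV π hπ hle
    by_cases hess : ∀ (Q' : FDRep F G) (g : Q' ⟶ W), Epi (g ≫ π) → Epi g
    · exact ⟨W, 𝟙 W, 𝟙 W, π, Category.id_comp _, hW, hπ, hess⟩
    push_neg at hess
    obtain ⟨Q', g, hgπ, hgne⟩ := hess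
    haveI := hgπ
    obtain ⟨t, ht⟩ := hW.factors π (g ≫ π)
    set e : W ⟶ W := t ≫ g with he_def
    have heπ : e ≫ π = π := by rw [he_def, Category.assoc]; exact ht
    have hene : ¬ Epi e := by
      intro he
      exact hgne (@epi_of_epi _ _ _ _ _ t g he)
    set ψ : (W : Type) →ₗ[F] W := fh e with hψ
    obtain ⟨n, hn, hstab⟩ := exists_pow_range_stab ψ
    set U : Submodule F W := LinearMap.range (ψ^n) with hU_def
    have hUfh : U = LinearMap.range (fh (epow e n)) := by rw [fh_epow]
    have hU : ∀ (gg : G), ∀ u ∈ U, W.ρ gg u ∈ U := by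
      rw [hUfh]
      rintro gg u ⟨v, rfl⟩
      exact ⟨W.ρ gg v, fh_comm (epow e n) gg v⟩
    have hmemU : ∀ x : W, fh (epow e n) x ∈ U := by
      intro x
      rw [hUfh]
      exact ⟨x, rfl⟩
    let W₁ : FDRep F G := subrep W U hU
    let m₁ : W₁ ⟶ W := subrepIncl W U hU
    let p : W ⟶ W₁ := mkHom (LinearMap.codRestrict U (fh (epow e n)) hmemU)
      (fun gg v => by
        apply Subtype.ext
        show fh (epow e n) (W.ρ gg v) = _
        rw [fh_comm]
        rfl)
    have hpm : p ≫ m₁ = epow e n := by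
      apply hom_ext
      rfl
    set c : W₁ ⟶ W₁ := m₁ ≫ p with hc_def
    have hcsurj : Function.Surjective (fh c) := by
      rintro ⟨u, hu⟩
      have hu2 : u ∈ LinearMap.range (ψ^(n+n)) := by
        rw [hstab (n+n) (Nat.le_add_right n n)]
        exact hu
      obtain ⟨x, hx⟩ := hu2
      refine ⟨⟨(ψ^n) x, by rw [hU_def]; exact ⟨x, rfl⟩⟩, ?_⟩
      apply Subtype.ext
      show fh (epow e n) ((ψ^n) x) = u
      rw [fh_epow, ← hψ, ← Module.End.mul_apply, ← pow_add]
      exact hx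
    have hcinj : Function.Injective (fh c) :=
      (LinearMap.injective_iff_surjective).mpr hcsurj
    haveI hciso : IsIso c := isIso_of_bijective c ⟨hcinj, hcsurj⟩
    let r₁ : W ⟶ W₁ := p ≫ inv c
    have hm₁r₁ : m₁ ≫ r₁ = 𝟙 W₁ := by
      show m₁ ≫ p ≫ inv c = 𝟙 W₁
      rw [← Category.assoc, ← hc_def, IsIso.hom_inv_id]
    have hprojW₁ : Projective W₁ := projective_of_retract m₁ r₁ hm₁r₁ hW
    have hπeq : π = p ≫ (m₁ ≫ π) := by
      rw [← Category.assoc, hpm]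
      exact (epow_comp_eq e π heπ n).symm
    have hπ₁ : Epi (m₁ ≫ π) := by
      rw [hπeq] at hπ
      exact @epi_of_epi _ _ _ _ _ p (m₁ ≫ π) hπ
    have hψnotsurj : ¬ Function.Surjective ψ := by
      intro hs
      exact hene (epi_of_surjective e hs)
    have hfrlt : finrank F W₁ ≤ d := by
      have h1 : finrank F W₁ = finrank F U := finrank_subrep W U hU
      obtain ⟨k, rfl⟩ : ∃ k, n = k + 1 := ⟨n - 1, by omega⟩
      have h2 : U ≤ LinearMap.range ψ := by
        rw [hU_def, pow_succ', Module.End.mul_eq_comp]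
        exact LinearMap.range_comp_le_range _ _
      have h3 : LinearMap.range ψ < ⊤ := by
        rw [lt_top_iff_ne_top]
        intro htop
        exact hψnotsurj (LinearMap.range_eq_top.mp htop)
      have h4 := Submodule.finrank_lt (K := F) (V := (W : Type)) h3.ne
      have h5 : finrank F U ≤ finrank F (LinearMap.range ψ) := Submodule.finrank_mono h2
      omega
    obtain ⟨Q, mQ, rQ, πQ, h1, h2, h3, h4⟩ := ih W₁ V hprojW₁ hV (m₁ ≫ π) hπ₁ hfrlt
    refine ⟨Q, mQ ≫ m₁, r₁ ≫ rQ, πQ, ?_, h2, h3, h4⟩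
    rw [Category.assoc, ← Category.assoc m₁ r₁ rQ, hm₁r₁, Category.id_comp]
    exact h1

theorem id_ne_zero_of_finrank_pos {N : FDRep F G} (h : 0 < finrank F N) : 𝟙 N ≠ (0 : N ⟶ N) := by
  haveI : Nontrivial (N : Type) := by
    have : FiniteDimensional F (N : Type) := inferInstance
    exact Module.nontrivial_of_finrank_pos h
  obtain ⟨x, hx⟩ := exists_ne (0 : (N : Type))
  intro h0
  apply hx
  have := DFunLike.congr_fun (congrArg fh h0) x
  simpa using this

theorem exists_simple_quotient (d : ℕ) : ∀ (N : FDRep F G), 0 < finrank F N →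
    finrank F N ≤ d → ∃ (V : FDRep F G) (q : N ⟶ V), Simple V ∧ Epi q := by
  induction d with
  | zero => intro N hpos hle; omega
  | succ d ih =>
    intro N hpos hle
    by_cases hs : Simple N
    · exact ⟨N, 𝟙 N, hs, inferInstance⟩
    have hex : ∃ (Y : FDRep F G) (f : Y ⟶ N), Mono f ∧ f ≠ 0 ∧ ¬IsIso f := by
      by_contra hno
      push_neg at hno
      apply hs
      constructor
      intro Y f hf
      constructor
      · intro hiso h0
        apply id_ne_zero_of_finrank_pos hpos
        calc 𝟙 N = inv f ≫ f := (IsIso.inv_hom_id f).symm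
        _ = inv f ≫ 0 := congrArg (fun x => inv f ≫ x) h0
        _ = 0 := Limits.comp_zero
      · intro hne
        exact hno Y f hf hne
    obtain ⟨Y, f, hmono, hne, hniso⟩ := hex
    have hinv : ∀ (g : G), ∀ u ∈ LinearMap.range (fh f), N.ρ g u ∈ LinearMap.range (fh f) := by
      rintro g u ⟨v, rfl⟩
      exact ⟨Y.ρ g v, fh_comm f g v⟩
    set U := LinearMap.range (fh f) with hU_def
    set C := quotrep N U hinv with hC_def
    have hproj : Epi (quotrepProj N U hinv) := by
      apply epi_of_surjective
      rw [fh_quotrepProj]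
      exact Submodule.mkQ_surjective U
    have hdimsum : finrank F (N ⧸ U) + finrank F U = finrank F N :=
      Submodule.finrank_quotient_add_finrank U
    have hCdim : finrank F C = finrank F (N ⧸ U) := rfl
    have hUpos : 0 < finrank F U := by
      rcases Nat.eq_zero_or_pos (finrank F U) with h | h
      · exfalso
        apply hne
        apply hom_ext
        rw [fh_zero]
        ext y
        have : fh f y ∈ U := ⟨y, rfl⟩
        rw [Submodule.finrank_eq_zero.mp h] at this
        simpa using this
      · exact h
    have hCpos : 0 < finrank F C := by
      rcases Nat.eq_zero_or_pos (finrank F C) with h | h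
      · exfalso
        apply hniso
        have hUeq : finrank F U = finrank F N := by omega
        have hUtop : U = ⊤ := Submodule.eq_top_of_finrank_eq hUeq
        apply isIso_of_bijective
        refine ⟨injective_of_mono f hmono, ?_⟩
        rw [← LinearMap.range_eq_top, ← hU_def, hUtop]
      · exact h
    obtain ⟨V, q, hVs, hqe⟩ := ih C hCpos (by omega)
    haveI := hproj
    haveI := hqe
    exact ⟨V, quotrepProj N U hinv ≫ q, hVs, inferInstance⟩

end Stmt18Aux

open Stmt18Aux in
theorem stmt18 {G : Type} [Group G] [Fintype G] (p : ℕ) [Fact p.Prime]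
    (P : Sylow p G) (F : Type) [Field F] [IsAlgClosed F] [CharP F p]
    -- Q₁ is the projective cover of the trivial module T
    (T Q₁ : FDRep F G) (hTtriv : ∀ g : G, T.ρ g = LinearMap.id)
    (hTdim : finrank F T = 1)
    (hQ₁ : Projective Q₁) (π₁ : Q₁ ⟶ T) (hπ₁ : Epi π₁)
    (hess₁ : ∀ (Q' : FDRep F G) (g : Q' ⟶ Q₁), Epi (g ≫ π₁) → Epi g)
    -- hypothesis Φ₁(1) = |G|_p
    (hdim : finrank F Q₁ = Nat.card (P : Subgroup G))
    -- β : a simple module B with projective cover Q_B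
    (B Q_B : FDRep F G) (hB : Simple B) (hQB : Projective Q_B)
    (π_B : Q_B ⟶ B) (hπB : Epi π_B)
    (hessB : ∀ (Q' : FDRep F G) (g : Q' ⟶ Q_B), Epi (g ≫ π_B) → Epi g)
    -- β is not a constituent of Φ₁
    (hnotconst : finrank F (Q_B ⟶ Q₁) = 0)
    -- Φ_β is a direct summand of Φ₁ · Φ₁
    (hsummand : ∃ (i : Q_B ⟶ Q₁ ⊗ Q₁) (r : Q₁ ⊗ Q₁ ⟶ Q_B), i ≫ r = 𝟙 Q_B) :
    -- conclusion: some irreducible constituent φ of Φ₁ has c_φ < φ(1)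
    ∃ (V Q_V : FDRep F G), Simple V ∧ Projective Q_V ∧
      (∃ π_V : Q_V ⟶ V, Epi π_V ∧
        ∀ (Q' : FDRep F G) (g : Q' ⟶ Q_V), Epi (g ≫ π_V) → Epi g) ∧
      0 < finrank F (Q_V ⟶ Q₁) ∧
      finrank F Q_V < Nat.card (P : Subgroup G) * finrank F V := by
  by_contra hG
  -- reformulated negation
  have hG' : ∀ (V Q : FDRep F G), Simple V → Projective Q →
      (∃ πV : Q ⟶ V, Epi πV ∧ ∀ (Q' : FDRep F G) (g : Q' ⟶ Q), Epi (g ≫ πV) → Epi g) →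
      0 < finrank F (Q ⟶ Q₁) →
      Nat.card (P : Subgroup G) * finrank F V ≤ finrank F Q := by
    intro V Q hs hproj hcov hpos
    by_contra hlt
    exact hG ⟨V, Q, hs, hproj, hcov, hpos, by omega⟩
  -- an epi from V ⊗ Q₁ onto V, for every V
  have hsV : ∀ V : FDRep F G, ∃ π : (V ⊗ Q₁ : FDRep F G) ⟶ V, Epi π := by
    have b := Module.finBasisOfFinrankEq F T hTdim
    set ℓ : (T : Type) →ₗ[F] F := b.coord 0 with hℓ
    obtain ⟨x₀, hx₀⟩ := surjective_of_epi π₁ hπ₁ (b 0)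
    have hℓx₀ : ℓ (fh π₁ x₀) = 1 := by
      rw [hx₀, hℓ, Basis.coord_apply, Basis.repr_self, Finsupp.single_eq_same]
    intro V
    let bil : (V : Type) →ₗ[F] (Q₁ : Type) →ₗ[F] V :=
      { toFun := fun v => (ℓ ∘ₗ fh π₁).smulRight v
        map_add' := fun v w => LinearMap.ext fun x => smul_add _ v w
        map_smul' := fun c v => LinearMap.ext fun x => smul_comm _ c v }
    have hbil : ∀ (v : V) (x : Q₁), TensorProduct.lift bil (v ⊗ₜ x) = ℓ (fh π₁ x) • v :=
      fun v x => rfl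
    have hcomm : ∀ (g : G) (z : (V ⊗ Q₁ : FDRep F G)),
        TensorProduct.lift bil ((V ⊗ Q₁ : FDRep F G).ρ g z) =
          V.ρ g (TensorProduct.lift bil z) := by
      intro g z
      induction z using TensorProduct.induction_on with
      | zero => rw [map_zero, map_zero, map_zero]
      | tmul v x =>
        have h1 : (V ⊗ Q₁ : FDRep F G).ρ g (v ⊗ₜ x) = (V.ρ g v) ⊗ₜ (Q₁.ρ g x) := rfl
        rw [h1, hbil, hbil]
        have h2 : fh π₁ (Q₁.ρ g x) = fh π₁ x := by
          rw [fh_comm π₁ g x, hTtriv g]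
          rfl
        rw [h2, map_smul]
      | add z w hz hw =>
        simp only [map_add, hz, hw]
    refine ⟨mkHom (TensorProduct.lift bil) hcomm, epi_of_surjective _ ?_⟩
    intro v
    refine ⟨v ⊗ₜ x₀, ?_⟩
    show TensorProduct.lift bil (v ⊗ₜ x₀) = v
    rw [hbil, hℓx₀, one_smul]
  have hcore : ∀ (N V : FDRep F G) (ι : N ⟶ Q₁) (qV : N ⟶ V), Mono ι → Epi qV → Simple V →
      ∀ f : (V ⊗ Q₁ : FDRep F G) ⟶ B, f = 0 := by
    intro N V ι qV hι hqV hVs f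
    by_contra hfne
    haveI := hqV
    -- any epi onto V is nonzero
    have hepi_ne : ∀ (X : FDRep F G) (π : X ⟶ V), Epi π → π ≠ 0 := by
      intro X π hπe h0
      have hsurj := surjective_of_epi π hπe
      rw [h0] at hsurj
      haveI : Subsingleton (V : Type) := ⟨fun a b => by
        obtain ⟨x, hx⟩ := hsurj a
        obtain ⟨y, hy⟩ := hsurj b
        rw [← hx, ← hy]
        simp⟩
      have h1 : finrank F V = 0 := Module.finrank_zero_iff.mpr inferInstance
      have h2 := finrank_pos_of_simple V hVs
      omega
    obtain ⟨πW, hπWe⟩ := hsV V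
    have hWproj : Projective (V ⊗ Q₁ : FDRep F G) := projective_tensor V Q₁ hQ₁
    obtain ⟨Q, m, r, πQ, hmr, hQproj, hπQ, hess⟩ :=
      cover_exists (finrank F ((V ⊗ Q₁ : FDRep F G) : Type)) (V ⊗ Q₁) V hWproj hVs πW hπWe
        (le_refl _)
    haveI := hπQ
    -- a nonzero morphism Q ⟶ Q₁
    obtain ⟨t, ht⟩ := hQproj.factors πQ qV
    have hu₀ : t ≫ ι ≠ 0 := by
      intro h0
      have ht0 : t = 0 := Limits.zero_of_comp_mono ι h0
      refine hepi_ne Q πQ hπQ ?_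
      rw [← ht, ht0, Limits.zero_comp]
    have hpos : 0 < finrank F (Q ⟶ Q₁) := by
      rw [Module.finrank_pos_iff]
      exact ⟨⟨t ≫ ι, 0, hu₀⟩⟩
    have hineq := hG' V Q hVs hQproj ⟨πQ, hπQ, hess⟩ hpos
    have hWfr : finrank F ((V ⊗ Q₁ : FDRep F G) : Type) =
        Nat.card (P : Subgroup G) * finrank F V := by
      show finrank F (TensorProduct F V Q₁) = _
      rw [Module.finrank_tensorProduct, hdim, Nat.mul_comm]
    have hretr : ∀ z, fh r (fh m z) = z := by
      intro z
      have h1 := DFunLike.congr_fun (congrArg fh hmr) z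
      rw [fh_comp] at h1
      simpa using h1
    have hminj : Function.Injective (fh m) := by
      intro x y hxy
      rw [← hretr x, ← hretr y, hxy]
    have hQle : finrank F Q ≤ finrank F ((V ⊗ Q₁ : FDRep F G) : Type) :=
      LinearMap.finrank_le_finrank_of_injective hminj
    have hQeq : finrank F Q = finrank F ((V ⊗ Q₁ : FDRep F G) : Type) := by omega
    have hrange : LinearMap.range (fh m) = ⊤ := by
      apply Submodule.eq_top_of_finrank_eq
      rw [LinearMap.finrank_range_of_inj hminj, hQeq]
    haveI hmiso : IsIso m := isIso_of_bijective m ⟨hminj, LinearMap.range_eq_top.mp hrange⟩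
    have hrinv : r = inv m := by
      have h1 := congrArg (fun x => inv m ≫ x) hmr
      simpa using h1
    have hrm : r ≫ m = 𝟙 (V ⊗ Q₁ : FDRep F G) := by rw [hrinv, IsIso.inv_hom_id]
    set πs : (V ⊗ Q₁ : FDRep F G) ⟶ V := r ≫ πQ with hπs
    haveI : Epi r := by rw [hrinv]; infer_instance
    have hπse : Epi πs := by rw [hπs]; exact epi_comp r πQ
    have hesss : ∀ (Q' : FDRep F G) (g : Q' ⟶ (V ⊗ Q₁ : FDRep F G)), Epi (g ≫ πs) → Epi g := by
      intro Q' g hg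
      rw [hπs, ← Category.assoc] at hg
      have hgr := hess Q' (g ≫ r) hg
      have hgeq : g = (g ≫ r) ≫ m := by rw [Category.assoc, hrm, Category.comp_id]
      rw [hgeq]
      haveI := hgr
      exact epi_comp _ _
    -- B-side lifts
    have hfepi : Epi f := (zero_or_epi f hB).resolve_left hfne
    haveI := hfepi
    haveI := hπB
    obtain ⟨h, hh⟩ := hWproj.factors f π_B
    have hhe : Epi h := hessB _ h (by rw [hh]; exact hfepi)
    haveI := hhe
    obtain ⟨s, hs⟩ := hQB.factors (𝟙 Q_B) h
    set eW : (V ⊗ Q₁ : FDRep F G) ⟶ (V ⊗ Q₁ : FDRep F G) := h ≫ s with heW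
    have hee : eW ≫ eW = eW := by
      rw [heW]
      calc (h ≫ s) ≫ h ≫ s = h ≫ (s ≫ h) ≫ s := by simp only [Category.assoc]
      _ = h ≫ s := by rw [hs, Category.id_comp]
    by_cases hce : Epi (eW ≫ πs)
    · have heid : eW = 𝟙 _ := epi_idem_eq_id eW hee (hesss _ eW hce)
      obtain ⟨t', ht'⟩ := hWproj.factors πW qV
      have hune : t' ≫ ι ≠ 0 := by
        intro h0
        have ht0 : t' = 0 := Limits.zero_of_comp_mono ι h0
        refine hepi_ne _ πW hπWe ?_
        rw [← ht', ht0, Limits.zero_comp]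
      have hsu : s ≫ (t' ≫ ι) ≠ 0 := by
        intro h0
        apply hune
        calc t' ≫ ι = 𝟙 (V ⊗ Q₁ : FDRep F G) ≫ (t' ≫ ι) := (Category.id_comp _).symm
        _ = (h ≫ s) ≫ (t' ≫ ι) := by rw [← heW, heid]
        _ = h ≫ (s ≫ (t' ≫ ι)) := Category.assoc _ _ _
        _ = h ≫ 0 := by rw [h0]
        _ = 0 := Limits.comp_zero
      haveI : Subsingleton (Q_B ⟶ Q₁) :=
        Module.finrank_zero_iff.mp hnotconst
      exact hsu (Subsingleton.elim _ _)
    · have heπ0 : eW ≫ πs = 0 := (zero_or_epi (eW ≫ πs) hVs).resolve_right hce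
      have hsplit : πs = (𝟙 (V ⊗ Q₁ : FDRep F G) - eW) ≫ πs := by
        rw [Preadditive.sub_comp, Category.id_comp, heπ0, sub_zero]
      have hepi' : Epi ((𝟙 (V ⊗ Q₁ : FDRep F G) - eW) ≫ πs) := by
        rw [← hsplit]
        exact hπse
      have he'epi := hesss _ _ hepi'
      have h1e : (𝟙 (V ⊗ Q₁ : FDRep F G) - eW) ≫ (𝟙 (V ⊗ Q₁ : FDRep F G) - eW) =
          (𝟙 (V ⊗ Q₁ : FDRep F G) - eW) := by
        rw [Preadditive.sub_comp, Preadditive.comp_sub, Preadditive.comp_sub]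
        rw [Category.id_comp, Category.comp_id, Category.id_comp, hee]
        abel
      have hsub : (𝟙 (V ⊗ Q₁ : FDRep F G) - eW) = 𝟙 (V ⊗ Q₁ : FDRep F G) :=
        epi_idem_eq_id _ h1e he'epi
      have heW0 : eW = 0 := by
        have := sub_eq_self.mp hsub
        exact this
      apply hfne
      calc f = h ≫ π_B := hh.symm
      _ = h ≫ (𝟙 Q_B) ≫ π_B := by rw [Category.id_comp]
      _ = h ≫ (s ≫ h) ≫ π_B := by rw [hs]
      _ = (h ≫ s) ≫ (h ≫ π_B) := by simp only [Category.assoc]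
      _ = eW ≫ f := by rw [← heW, hh]
      _ = 0 ≫ f := by rw [heW0]
      _ = 0 := Limits.zero_comp
  have hmain : ∀ (d : ℕ) (N : FDRep F G) (ι : N ⟶ Q₁), Mono ι → finrank F N ≤ d →
      ∀ f : (N ⊗ Q₁ : FDRep F G) ⟶ B, f = 0 := by
    have hzerocase : ∀ (N : FDRep F G), finrank F N = 0 →
        ∀ f : (N ⊗ Q₁ : FDRep F G) ⟶ B, f = 0 := by
      intro N h0 f
      have hfr : finrank F ((N ⊗ Q₁ : FDRep F G) : Type) = 0 := by
        show finrank F (TensorProduct F N Q₁) = 0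
        rw [Module.finrank_tensorProduct]
        simp [h0]
      haveI : Subsingleton ((N ⊗ Q₁ : FDRep F G) : Type) := Module.finrank_zero_iff.mp hfr
      apply hom_ext
      rw [fh_zero]
      ext z
      rw [Subsingleton.elim z 0, map_zero]
      rfl
    intro d
    induction d with
    | zero =>
      intro N ι hι hle f
      exact hzerocase N (by omega) f
    | succ d ih =>
      intro N ι hι hle f
      rcases Nat.eq_zero_or_pos (finrank F N) with h0 | hpos
      · exact hzerocase N h0 f
      obtain ⟨V, qV, hVs, hqV⟩ := exists_simple_quotient (finrank F N) N hpos (le_refl _)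
      have hinv : ∀ (g : G), ∀ x ∈ LinearMap.ker (fh qV), N.ρ g x ∈ LinearMap.ker (fh qV) := by
        intro g x hx
        rw [LinearMap.mem_ker] at hx ⊢
        rw [fh_comm qV g x, hx, map_zero]
      set N' := subrep N (LinearMap.ker (fh qV)) hinv with hN'
      set ι' := subrepIncl N (LinearMap.ker (fh qV)) hinv with hι'
      have hmono' : Mono (ι' ≫ ι) := by
        apply mono_of_injective
        rw [fh_comp]
        exact (injective_of_mono ι hι).comp (by rw [hι', fh_subrepIncl]; exact Subtype.coe_injective)
      have hrn := LinearMap.finrank_range_add_finrank_ker (fh qV)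
      rw [LinearMap.range_eq_top.mpr (surjective_of_epi qV hqV), finrank_top] at hrn
      have hVpos := finrank_pos_of_simple V hVs
      have hle' : finrank F N' ≤ d := by
        have hfr : finrank F N' = finrank F (LinearMap.ker (fh qV)) :=
          finrank_subrep N (LinearMap.ker (fh qV)) hinv
        omega
      have h1 : (ι' ▷ Q₁) ≫ f = 0 := ih N' (ι' ≫ ι) hmono' hle' ((ι' ▷ Q₁) ≫ f)
      have hqsurj : Function.Surjective (fh qV) := surjective_of_epi qV hqV
      have husurj : Function.Surjective (fh (qV ▷ Q₁)) := by
        rw [fh_whiskerRight]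
        exact LinearMap.rTensor_surjective _ hqsurj
      have hexact : Function.Exact (fh ι') (fh qV) := by
        rw [LinearMap.exact_iff, hι', fh_subrepIncl]
        exact (Submodule.range_subtype _).symm
      have hex2 : Function.Exact (LinearMap.rTensor ((Q₁ : Type)) (fh ι'))
          (LinearMap.rTensor ((Q₁ : Type)) (fh qV)) :=
        rTensor_exact ((Q₁ : Type)) hexact hqsurj
      have hker : LinearMap.ker (fh (qV ▷ Q₁)) ≤ LinearMap.ker (fh f) := by
        intro z hz
        rw [LinearMap.mem_ker] at hz ⊢
        rw [fh_whiskerRight] at hz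
        have hz2 : z ∈ LinearMap.range (LinearMap.rTensor ((Q₁ : Type)) (fh ι')) := by
          rw [← LinearMap.exact_iff.mp hex2]
          exact hz
        obtain ⟨y, rfl⟩ := hz2
        have h3 : fh f (LinearMap.rTensor ((Q₁ : Type)) (fh ι') y) = fh ((ι' ▷ Q₁) ≫ f) y := by
          rw [fh_comp, fh_whiskerRight]
          rfl
        rw [h3, h1, fh_zero]
        rfl
      set u := fh (qV ▷ Q₁) with hu
      set eqv := LinearMap.quotKerEquivOfSurjective u husurj with heqv
      set fbarlin : ((V ⊗ Q₁ : FDRep F G) : Type) →ₗ[F] B :=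
        (Submodule.liftQ (LinearMap.ker u) (fh f) hker) ∘ₗ (eqv.symm : _ →ₗ[F] _) with hfbarlin
      have hkey : ∀ x, fbarlin (u x) = fh f x := by
        intro x
        have h2 : eqv.symm (u x) = Submodule.Quotient.mk x := by
          apply eqv.injective
          rw [LinearEquiv.apply_symm_apply]
          rfl
        show (Submodule.liftQ (LinearMap.ker u) (fh f) hker) (eqv.symm (u x)) = fh f x
        rw [h2, Submodule.liftQ_apply]
      have hcommbar : ∀ (g : G) (z : ((V ⊗ Q₁ : FDRep F G) : Type)),
          fbarlin ((V ⊗ Q₁ : FDRep F G).ρ g z) = B.ρ g (fbarlin z) := by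
        intro g z
        obtain ⟨x, rfl⟩ := husurj z
        have hcx : (V ⊗ Q₁ : FDRep F G).ρ g (u x) = u ((N ⊗ Q₁ : FDRep F G).ρ g x) :=
          (fh_comm (qV ▷ Q₁) g x).symm
        rw [hcx, hkey, hkey, fh_comm]
      have hfac : (qV ▷ Q₁) ≫ mkHom fbarlin hcommbar = f := by
        apply hom_ext
        rw [fh_comp]
        ext x
        exact hkey x
      rw [← hfac, hcore N V ι qV hι hqV hVs (mkHom fbarlin hcommbar), Limits.comp_zero]
  obtain ⟨i, r, hir⟩ := hsummand
  have hr0 : r ≫ π_B = 0 :=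
    hmain (finrank F Q₁) Q₁ (𝟙 Q₁) inferInstance (le_refl _) (r ≫ π_B)
  have hπB0 : π_B = 0 := by
    calc π_B = 𝟙 Q_B ≫ π_B := (Category.id_comp _).symm
    _ = (i ≫ r) ≫ π_B := by rw [hir]
    _ = i ≫ (r ≫ π_B) := Category.assoc _ _ _
    _ = i ≫ 0 := by rw [hr0]
    _ = 0 := Limits.comp_zero
  have hid0 : 𝟙 B = (0 : B ⟶ B) := by
    haveI := hπB
    apply (cancel_epi π_B).mp
    rw [hπB0]
    simp
  exact id_ne_zero_of_finrank_pos (finrank_pos_of_simple B hB) hid0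
end

section
/- Let N ⊴ G with p not dividing |G:N|, and let θ ∈ IBr_p(N) be a constituent of the restriction φ|_N of φ ∈ IBr_p(G). Then the P-fixed-point dimension satisfies φ^{Fix(P)}(1) = (φ(1)/θ(1))·θ^{Fix(P)}(1), where P ∈ Syl_p(G) (so P ≤ N). -/
open CategoryTheory Module

section Aux

variable {F : Type} [Field F]

/-- The subrepresentation on a stable submodule. -/
noncomputable def auxSubRep {H : Type} [Group H] (X : FDRep F H) (S : Submodule F X)
    (hS : ∀ h : H, ∀ x ∈ S, X.ρ h x ∈ S) : Representation F H S where
  toFun h := (X.ρ h).restrict (fun x hx => hS h x hx)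
  map_one' := by
    ext x
    simp [LinearMap.restrict_apply]
  map_mul' g h := by
    ext x
    simp [LinearMap.restrict_apply]

/-- A nonzero stable submodule of a simple `FDRep` is everything. -/
theorem aux_stable_eq_top {H : Type} [Group H] (X : FDRep F H) (hX : Simple X)
    (S : Submodule F X) (hS : ∀ h : H, ∀ x ∈ S, X.ρ h x ∈ S) (hbot : S ≠ ⊥) :
    S = ⊤ := by
  classical
  let Y : FDRep F H := FDRep.of (auxSubRep X S hS)
  let incl : Y ⟶ X :=
    { hom := FGModuleCat.ofHom S.subtype
      comm := fun h => by
        ext x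
        rfl }
  have hmono : Mono incl := by
    constructor
    intro Z u v huv
    ext z
    have := congrArg (fun q => q.hom.hom.hom) huv
    have h2 := LinearMap.congr_fun this z
    exact h2
  obtain ⟨s, hsS, hs0⟩ := Submodule.exists_mem_ne_zero_of_ne_bot hbot
  have hne : incl ≠ 0 := by
    intro h0
    have := congrArg (fun q => q.hom.hom.hom) h0
    have h2 := LinearMap.congr_fun this ⟨s, hsS⟩
    exact hs0 h2
  have hiso : IsIso incl := isIso_of_mono_of_nonzero hne
  have hsurj : Function.Surjective (S.subtype) := by
    intro v
    have h1 : CategoryTheory.inv incl ≫ incl = 𝟙 X := IsIso.inv_hom_id incl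
    have h2 := congrArg (fun q => q.hom.hom.hom) h1
    have h3 := LinearMap.congr_fun h2 v
    exact ⟨(CategoryTheory.inv incl).hom v, h3⟩
  rw [Submodule.eq_top_iff']
  intro v
  obtain ⟨⟨x, hx⟩, rfl⟩ := hsurj v
  exact hx

variable {G : Type} [Group G] {V : Type} [AddCommGroup V] [Module F V]

/-- The submodule of vectors fixed by every element of a set `Q ⊆ G`. -/
def auxFix (ρ : Representation F G V) (Q : Set G) : Submodule F V where
  carrier := {v | ∀ x ∈ Q, ρ x v = v}
  add_mem' := fun ha hb x hx => by rw [map_add, ha x hx, hb x hx]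
  zero_mem' := fun x hx => by simp
  smul_mem' := fun c a ha x hx => by rw [map_smul, ha x hx]

lemma auxFix_mem (ρ : Representation F G V) (Q : Set G) (v : V) :
    v ∈ auxFix ρ Q ↔ ∀ x ∈ Q, ρ x v = v := Iff.rfl

lemma aux_rho_inj (ρ : Representation F G V) (g : G) : Function.Injective (ρ g) := by
  intro a b hab
  have := congrArg (ρ g⁻¹) hab
  simpa [← Module.End.mul_apply, ← map_mul] using this

lemma aux_key (ρ : Representation F G V) (a b : G) (v : V) :
    ρ a (ρ b v) = ρ (a * b) v := by rw [map_mul]; rfl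

/-- Conjugation invariance of fixed-space dimensions. -/
lemma aux_finrank_fix_conj [FiniteDimensional F V] (ρ : Representation F G V) (g : G)
    (Q : Set G) (S : Submodule F V) :
    finrank F ((auxFix ρ ((fun x => g * x * g⁻¹) '' Q) ⊓ S.map (ρ g) : Submodule F V)) =
    finrank F ((auxFix ρ Q ⊓ S : Submodule F V)) := by
  have hmap : (auxFix ρ Q ⊓ S : Submodule F V).map (ρ g)
      = (auxFix ρ ((fun x => g * x * g⁻¹) '' Q) ⊓ S.map (ρ g) : Submodule F V) := by
    ext v
    constructor
    · rintro ⟨u, ⟨hufix, huS⟩, rfl⟩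
      refine ⟨?_, ⟨u, huS, rfl⟩⟩
      rintro y ⟨x, hx, rfl⟩
      rw [aux_key]
      have hgx : g * x * g⁻¹ * g = g * x := by group
      rw [hgx, ← aux_key, hufix x hx]
    · rintro ⟨hvfix, u, huS, rfl⟩
      refine ⟨u, ⟨?_, huS⟩, rfl⟩
      intro x hx
      apply aux_rho_inj ρ g
      rw [aux_key]
      have hgx : g * x = g * x * g⁻¹ * g := by group
      rw [hgx, ← aux_key]
      exact hvfix (g * x * g⁻¹) ⟨x, hx, rfl⟩
  rw [← hmap]
  exact (LinearEquiv.finrank_eq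
    (Submodule.equivMapOfInjective (ρ g) (aux_rho_inj ρ g) _)).symm

/-- Fixed vectors distribute over disjoint stable sups. -/
lemma aux_fix_inf_sup (ρ : Representation F G V) (Q : Set G) (A B : Submodule F V)
    (hA : ∀ x ∈ Q, ∀ v ∈ A, ρ x v ∈ A) (hB : ∀ x ∈ Q, ∀ v ∈ B, ρ x v ∈ B)
    (hAB : A ⊓ B = ⊥) :
    auxFix ρ Q ⊓ (A ⊔ B) = (auxFix ρ Q ⊓ A) ⊔ (auxFix ρ Q ⊓ B) := by
  refine le_antisymm ?_ (sup_le (inf_le_inf_left _ le_sup_left) (inf_le_inf_left _ le_sup_right))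
  intro v hv
  rw [Submodule.mem_inf] at hv
  obtain ⟨hvfix, hvsup⟩ := hv
  rw [Submodule.mem_sup] at hvsup
  obtain ⟨a, haA, b, hbB, rfl⟩ := hvsup
  have hfa : ∀ x ∈ Q, ρ x a = a := by
    intro x hx
    have h1 : ρ x a - a = b - ρ x b := by
      rw [sub_eq_sub_iff_add_eq_add]
      have := hvfix x hx
      rw [map_add] at this
      rw [this]
      abel
    have h2 : ρ x a - a ∈ A ⊓ B := by
      constructor
      · exact sub_mem (hA x hx a haA) haA
      · rw [h1]; exact sub_mem hbB (hB x hx b hbB)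
    rw [hAB, Submodule.mem_bot, sub_eq_zero] at h2
    exact h2
  have hfb : ∀ x ∈ Q, ρ x b = b := by
    intro x hx
    have := hvfix x hx
    rw [map_add, hfa x hx] at this
    exact add_left_cancel this
  exact Submodule.mem_sup.mpr ⟨a, ⟨hfa, haA⟩, b, ⟨hfb, hbB⟩, rfl⟩

end Aux
theorem stmt19 {G : Type} [Group G] [Fintype G] (p : ℕ) [Fact p.Prime]
    (P : Sylow p G) (N : Subgroup G) [N.Normal] (hind : ¬ p ∣ N.index)
    (hPN : (P : Subgroup G) ≤ N)
    (F : Type) [Field F] [IsAlgClosed F] [CharP F p]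
    (V : FDRep F G) (hV : Simple V) (W : FDRep F N) (hW : Simple W)
    (f : W ⟶ (Action.res (FGModuleCat F) N.subtype).obj V)
    (hf : f ≠ 0) :
    finrank F (Representation.invariants
        (V.ρ.comp (P : Subgroup G).subtype : Representation F (P : Subgroup G) V)) *
      finrank F W =
    finrank F (Representation.invariants
        (W.ρ.comp ((P : Subgroup G).subgroupOf N).subtype :
          Representation F ((P : Subgroup G).subgroupOf N) W)) *
      finrank F V := by
  classical
  -- the image of `f` as a submodule of `V`
  let fh : W →ₗ[F] V := f.hom.hom.hom
  have hfe : ∀ (n : N) (w : W), fh (W.ρ n w) = V.ρ (n : G) (fh w) := by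
    intro n w
    exact LinearMap.congr_fun (congrArg (fun q => q.hom.hom) (f.comm n)) w
  let U : Submodule F V := LinearMap.range fh
  have hUstab : ∀ n ∈ N, ∀ v ∈ U, V.ρ n v ∈ U := by
    rintro n hn v ⟨w, rfl⟩
    exact ⟨W.ρ ⟨n, hn⟩ w, (hfe ⟨n, hn⟩ w)⟩
  have hWker : ∀ (T : Submodule F W), (∀ m : N, ∀ w ∈ T, W.ρ m w ∈ T) → T ≠ ⊥ → T = ⊤ :=
    fun T hT hbot => aux_stable_eq_top W hW T hT hbot
  have hfh0 : fh ≠ 0 := by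
    intro h0
    apply hf
    ext w
    exact LinearMap.congr_fun h0 w
  have hinjf : Function.Injective fh := by
    rw [← LinearMap.ker_eq_bot]
    by_contra hk
    have := hWker (LinearMap.ker fh) ?_ hk
    · apply hfh0
      ext w
      have : w ∈ LinearMap.ker fh := this ▸ Submodule.mem_top
      simpa using this
    · intro m w hw
      rw [LinearMap.mem_ker] at hw ⊢
      rw [hfe m w, hw, map_zero]
  have hUbot : U ≠ ⊥ := by
    intro h0
    apply hfh0
    ext w
    have : fh w ∈ U := ⟨w, rfl⟩
    rw [h0] at this
    simpa using this
  have hUd : finrank F U = finrank F W :=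
    ((LinearEquiv.ofInjective fh hinjf).finrank_eq).symm
  have hUsimple : ∀ T : Submodule F V, (∀ n ∈ N, ∀ v ∈ T, V.ρ n v ∈ T) →
      T ≤ U → T ≠ ⊥ → T = U := by
    intro T hTstab hTU hTbot
    have hT' : T.comap fh = ⊤ := by
      apply hWker
      · intro m w hw
        rw [Submodule.mem_comap] at hw ⊢
        rw [hfe m w]
        exact hTstab m m.2 _ hw
      · obtain ⟨v, hvT, hv0⟩ := Submodule.exists_mem_ne_zero_of_ne_bot hTbot
        obtain ⟨w, rfl⟩ := hTU hvT
        intro hbot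
        have hw : w ∈ T.comap fh := Submodule.mem_comap.mpr hvT
        rw [hbot] at hw
        simp only [Submodule.mem_bot] at hw
        rw [hw, map_zero] at hv0
        exact hv0 rfl
    refine le_antisymm hTU ?_
    rintro v ⟨w, rfl⟩
    have : w ∈ T.comap fh := hT' ▸ Submodule.mem_top
    exact this
  -- the fixed space of `P` on `V`
  let Inv : Submodule F V := auxFix V.ρ ((P : Subgroup G) : Set G)
  have hInvEq : (Representation.invariants
      (V.ρ.comp (P : Subgroup G).subtype : Representation F (P : Subgroup G) V)) = Inv := by
    ext v
    rw [Representation.mem_invariants, auxFix_mem]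
    constructor
    · intro h x hx
      exact h ⟨x, hx⟩
    · intro h x
      exact h x.1 x.2
  -- `Inv ⊓ U` matches the invariants of `W`
  have hJe : finrank F ((Inv ⊓ U : Submodule F V)) = finrank F (Representation.invariants
      (W.ρ.comp ((P : Subgroup G).subgroupOf N).subtype :
        Representation F ((P : Subgroup G).subgroupOf N) W)) := by
    symm
    set WI := Representation.invariants
      (W.ρ.comp ((P : Subgroup G).subgroupOf N).subtype :
        Representation F ((P : Subgroup G).subgroupOf N) W) with hWI
    have hmapsto : ∀ w ∈ WI, fh w ∈ (Inv ⊓ U : Submodule F V) := by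
      intro w hw
      refine ⟨?_, ⟨w, rfl⟩⟩
      intro x hx
      have hxN : x ∈ N := hPN hx
      have hmem : (⟨x, hxN⟩ : N) ∈ (P : Subgroup G).subgroupOf N := by
        rwa [Subgroup.mem_subgroupOf]
      have := hw ⟨⟨x, hxN⟩, hmem⟩
      rw [← hfe ⟨x, hxN⟩ w]
      exact congrArg fh this
    let e : WI →ₗ[F] (Inv ⊓ U : Submodule F V) := fh.restrict hmapsto
    have hebij : Function.Bijective e := by
      constructor
      · intro a b hab
        apply Subtype.ext
        apply hinjf
        exact congrArg Subtype.val hab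
      · rintro ⟨v, hvInv, w, rfl⟩
        have hwWI : w ∈ WI := by
          intro x
          show W.ρ x.1 w = w
          apply hinjf
          rw [hfe x.1 w]
          exact hvInv (x.1 : G) (Subgroup.mem_subgroupOf.mp x.2)
        exact ⟨⟨w, hwWI⟩, Subtype.ext rfl⟩
    exact (LinearEquiv.ofBijective e hebij).finrank_eq
  -- the conjugate submodules
  let C : G → Submodule F V := fun g => U.map (V.ρ g)
  have hCd : ∀ g : G, finrank F (C g) = finrank F U := fun g =>
    (LinearEquiv.finrank_eq (Submodule.equivMapOfInjective (V.ρ g) (aux_rho_inj V.ρ g) U)).symm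
  have hCstab : ∀ (g : G), ∀ n ∈ N, ∀ v ∈ C g, V.ρ n v ∈ C g := by
    rintro g n hn v ⟨u, huU, rfl⟩
    have hmem : g⁻¹ * n * g ∈ N := by
      have := Subgroup.Normal.conj_mem ‹N.Normal› n hn g⁻¹
      simpa using this
    refine ⟨V.ρ (g⁻¹ * n * g) u, hUstab _ hmem _ huU, ?_⟩
    rw [aux_key, aux_key]
    congr 1
    group
  have hmapU : ∀ g₁ g₂ : G, (U.map (V.ρ g₁)).map (V.ρ g₂) = U.map (V.ρ (g₂ * g₁)) := by
    intro g₁ g₂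
    rw [← Submodule.map_comp]
    congr 1
    ext u
    exact aux_key V.ρ g₂ g₁ u
  have hCsimple : ∀ (g : G) (T : Submodule F V), (∀ n ∈ N, ∀ v ∈ T, V.ρ n v ∈ T) →
      T ≤ C g → T ≠ ⊥ → T = C g := by
    intro g T hTstab hTC hTbot
    have hT'U : T.map (V.ρ g⁻¹) ≤ U := by
      refine le_trans (Submodule.map_mono hTC) ?_
      rw [show (C g : Submodule F V) = U.map (V.ρ g) from rfl, hmapU, inv_mul_cancel]
      intro v hv
      simpa [Submodule.map_one] using hv
    have hT'stab : ∀ n ∈ N, ∀ v ∈ T.map (V.ρ g⁻¹), V.ρ n v ∈ T.map (V.ρ g⁻¹) := by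
      rintro n hn v ⟨t, htT, rfl⟩
      refine ⟨V.ρ (g * n * g⁻¹) t, hTstab _ (Subgroup.Normal.conj_mem ‹N.Normal› n hn g) _ htT, ?_⟩
      rw [aux_key, aux_key]
      congr 1
      group
    have hT'bot : T.map (V.ρ g⁻¹) ≠ ⊥ := by
      intro h0
      apply hTbot
      obtain ⟨v, hvT, hv0⟩ := Submodule.exists_mem_ne_zero_of_ne_bot hTbot
      exact absurd (h0 ▸ Submodule.mem_map_of_mem (f := V.ρ g⁻¹) hvT : V.ρ g⁻¹ v ∈ (⊥ : Submodule F V))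
        (by simpa using fun h => hv0 (aux_rho_inj V.ρ g⁻¹ (by simpa using h)))
    have := hUsimple _ hT'stab hT'U hT'bot
    have h2 : (T.map (V.ρ g⁻¹)).map (V.ρ g) = U.map (V.ρ g) := by rw [this]
    rw [← Submodule.map_comp] at h2
    have h3 : (V.ρ g).comp (V.ρ g⁻¹) = LinearMap.id := by
      ext v
      simp [aux_key]
    rw [h3, Submodule.map_id] at h2
    exact h2
  -- stability of the total sum, and it is everything
  have hsupstab : ∀ h : G, ∀ v ∈ (⨆ g : G, C g), V.ρ h v ∈ (⨆ g : G, C g) := by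
    intro h v hv
    have h1 : V.ρ h v ∈ (⨆ g : G, C g).map (V.ρ h) := Submodule.mem_map_of_mem hv
    rw [Submodule.map_iSup] at h1
    have h2 : (⨆ g, (C g).map (V.ρ h)) ≤ ⨆ g, C g := by
      refine iSup_le fun g => ?_
      rw [show (C g).map (V.ρ h) = C (h * g) from hmapU g h]
      exact le_iSup C (h * g)
    exact h2 h1
  have hC1 : C 1 = U := by
    show U.map (V.ρ 1) = U
    rw [show V.ρ 1 = LinearMap.id from by ext v; simp, Submodule.map_id]
  have hsupr : (⨆ g : G, C g) = ⊤ := by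
    refine aux_stable_eq_top V hV _ hsupstab ?_
    intro h0
    apply hUbot
    have hU1 : U ≤ ⨆ g : G, C g := hC1 ▸ le_iSup C 1
    rw [h0, le_bot_iff] at hU1
    exact hU1
  -- coercion of conjugated Sylow subgroups
  have hcoeSmul : ∀ (h : G) (Q : Sylow p G),
      ((↑(h • Q) : Subgroup G) : Set G) = (fun x => h * x * h⁻¹) '' ((Q : Subgroup G) : Set G) := by
    intro h Q
    rw [Sylow.smul_def, Sylow.pointwise_smul_def, Subgroup.coe_pointwise_smul]
    ext x
    constructor
    · rintro ⟨y, hy, rfl⟩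
      exact ⟨y, hy, rfl⟩
    · rintro ⟨y, hy, rfl⟩
      exact ⟨y, hy, rfl⟩
  have hUmapN : ∀ n ∈ N, U.map (V.ρ n) = U := by
    intro n hn
    refine le_antisymm ?_ ?_
    · rintro v ⟨u, huU, rfl⟩
      exact hUstab n hn u huU
    · intro u huU
      refine ⟨V.ρ n⁻¹ u, hUstab n⁻¹ (inv_mem hn) u huU, ?_⟩
      rw [aux_key]
      simp
  -- the Sylow conjugation step
  have hSylow : ∀ g : G, ∃ n, n ∈ N ∧
      ((fun x => n * x * n⁻¹) '' ((fun x => g⁻¹ * x * g⁻¹⁻¹) ''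
        ((P : Subgroup G) : Set G))) = ((P : Subgroup G) : Set G) := by
    intro g
    have hP2N : ((g⁻¹ • P : Sylow p G) : Subgroup G) ≤ N := by
      intro x hx
      have : x ∈ ((↑(g⁻¹ • P) : Subgroup G) : Set G) := hx
      rw [hcoeSmul] at this
      obtain ⟨y, hy, rfl⟩ := this
      have := Subgroup.Normal.conj_mem ‹N.Normal› y (hPN hy) g⁻¹
      exact this
    obtain ⟨n, hn⟩ := MulAction.exists_smul_eq (↥N) ((g⁻¹ • P).subtype hP2N) (P.subtype hPN)
    rw [Sylow.smul_subtype] at hn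
    have heq : ((n : G) • (g⁻¹ • P) : Sylow p G) = P := Sylow.subtype_injective hn
    refine ⟨n, n.2, ?_⟩
    have := congrArg (fun (Q : Sylow p G) => ((Q : Subgroup G) : Set G)) heq
    rw [hcoeSmul, hcoeSmul] at this
    exact this
  -- each conjugate contributes the same invariant dimension
  have hCe : ∀ g : G, finrank F ((Inv ⊓ C g : Submodule F V))
      = finrank F ((Inv ⊓ U : Submodule F V)) := by
    intro g
    obtain ⟨n, hnN, hconj⟩ := hSylow g
    have hA : finrank F ((Inv ⊓ C g : Submodule F V)) = finrank F
        ((auxFix V.ρ ((fun x => g⁻¹ * x * g⁻¹⁻¹) '' ((P : Subgroup G) : Set G)) ⊓ U :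
          Submodule F V)) := by
      have hsets : ((fun x => g * x * g⁻¹) '' ((fun x => g⁻¹ * x * g⁻¹⁻¹) ''
          ((P : Subgroup G) : Set G))) = ((P : Subgroup G) : Set G) := by
        ext x
        constructor
        · rintro ⟨y, ⟨z, hz, rfl⟩, rfl⟩
          convert hz using 2
          group
        · intro hx
          exact ⟨g⁻¹ * x * g⁻¹⁻¹, ⟨x, hx, rfl⟩, by group⟩
      have h1 := aux_finrank_fix_conj V.ρ g
        ((fun x => g⁻¹ * x * g⁻¹⁻¹) '' ((P : Subgroup G) : Set G)) U
      rw [hsets] at h1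
      exact h1
    have hB : finrank F
        ((auxFix V.ρ ((fun x => g⁻¹ * x * g⁻¹⁻¹) '' ((P : Subgroup G) : Set G)) ⊓ U :
          Submodule F V)) = finrank F ((Inv ⊓ U : Submodule F V)) := by
      have h2 := aux_finrank_fix_conj V.ρ n
        ((fun x => g⁻¹ * x * g⁻¹⁻¹) '' ((P : Subgroup G) : Set G)) U
      rw [hconj, hUmapN n hnN] at h2
      exact h2.symm
    rw [hA, hB]
  -- the greedy direct-sum extraction
  have main : ∀ s : Finset G, ∃ k : ℕ,
      finrank F ((s.sup C : Submodule F V)) = k * finrank F U ∧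
      finrank F ((Inv ⊓ s.sup C : Submodule F V)) = k * finrank F ((Inv ⊓ U : Submodule F V)) ∧
      (∀ n ∈ N, ∀ v ∈ s.sup C, V.ρ n v ∈ s.sup C) := by
    intro s
    induction s using Finset.induction_on with
    | empty =>
      refine ⟨0, ?_, ?_, ?_⟩
      · simp [Finset.sup_empty, finrank_bot]
      · simp [Finset.sup_empty, finrank_bot]
      · intro n hn v hv
        simp only [Finset.sup_empty, Submodule.mem_bot] at hv ⊢
        rw [hv, map_zero]
    | insert a s ha ih =>
      obtain ⟨k, h1, h2, hstab⟩ := ih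
      rw [Finset.sup_insert]
      by_cases hle : C a ≤ s.sup C
      · rw [sup_eq_right.mpr hle]
        exact ⟨k, h1, h2, hstab⟩
      · have hdisj : C a ⊓ s.sup C = ⊥ := by
          by_contra hne
          have hinfstab : ∀ n ∈ N, ∀ v ∈ C a ⊓ s.sup C, V.ρ n v ∈ C a ⊓ s.sup C := by
            intro n hn v hv
            exact ⟨hCstab a n hn v hv.1, hstab n hn v hv.2⟩
          have := hCsimple a (C a ⊓ s.sup C) hinfstab inf_le_left hne
          exact hle (inf_eq_left.mp this)
        refine ⟨k + 1, ?_, ?_, ?_⟩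
        · have hd := Submodule.finrank_sup_add_finrank_inf_eq (C a) (s.sup C)
          rw [hdisj, finrank_bot, add_zero, hCd a, h1] at hd
          rw [hd]
          ring
        · have hdist := aux_fix_inf_sup V.ρ ((P : Subgroup G) : Set G) (C a) (s.sup C)
            (fun x hx v hv => hCstab a x (hPN hx) v hv)
            (fun x hx v hv => hstab x (hPN hx) v hv) hdisj
          rw [hdist]
          have hdisj2 : (Inv ⊓ C a) ⊓ (Inv ⊓ s.sup C) = ⊥ := by
            rw [← le_bot_iff, ← hdisj]
            exact le_inf (le_trans inf_le_left inf_le_right)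
              (le_trans inf_le_right inf_le_right)
          have hd := Submodule.finrank_sup_add_finrank_inf_eq (Inv ⊓ C a) (Inv ⊓ s.sup C)
          rw [hdisj2, finrank_bot, add_zero, hCe a, h2] at hd
          rw [hd]
          ring
        · intro n hn v hv
          rw [Submodule.mem_sup] at hv ⊢
          obtain ⟨x, hx, y, hy, rfl⟩ := hv
          exact ⟨V.ρ n x, hCstab a n hn x hx, V.ρ n y, hstab n hn y hy, (map_add _ _ _).symm⟩
  obtain ⟨k, h1, h2, -⟩ := main Finset.univ
  have huniv : (Finset.univ : Finset G).sup C = ⊤ := by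
    rw [Finset.sup_eq_iSup]
    simpa using hsupr
  rw [huniv, finrank_top] at h1
  rw [huniv, inf_top_eq] at h2
  rw [hInvEq, ← hJe, h2, ← hUd, h1]
  ring
end
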